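/- The DKW method yields effective bounds on entropic risk: let X be a nonnegative real-valued random variable, γ > 0, δ ∈ (0,1), ε > 0, and let X_1, X_2, … be i.i.d. copies of X. For k samples let F̂_k be the empirical cdf, Δ_k = √(ln(2/δ)/(2k)), F̲_k(x) = min(F̂_k(x) + Δ_k, 1), and F̄_k(x) = max(F̂_k(x) − Δ_k, 0). Define, for a nondecreasing G : [0,∞) → [0,1], E_γ(G) = −(1/γ) log(γ ∫_0^∞ e^{−γx} G(x) dx). Then there exists k₀ such that for all k ≥ k₀, with probability at least 1 − δ: E_γ(F̲_k) ≤ ERisk_γ(X) ≤ E_γ(F̄_k) and E_γ(F̄_k) − E_γ(F̲_k) ≤ ε. -/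

import Mathlib

open MeasureTheory ProbabilityTheory

/-- The empirical cdf of the first `k` samples `Xs 0, …, Xs (k-1)` at outcome `ω`:
`F̂_k(x) = (1/k) |{i < k : Xs i ω ≤ x}|`. -/
noncomputable def empiricalCdf {Ω : Type*} (Xs : ℕ → Ω → ℝ) (k : ℕ) (ω : Ω) (x : ℝ) : ℝ :=
  (((Finset.range k).filter fun i => Xs i ω ≤ x).card : ℝ) / k

/-- The DKW half-width `Δ_k = √(ln(2/δ)/(2k))`. -/
noncomputable def dkwDelta (δ : ℝ) (k : ℕ) : ℝ :=
  Real.sqrt (Real.log (2 / δ) / (2 * k))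

/-- The entropic risk of a (band) function `G : ℝ → [0,1]`:
`E_γ(G) = -(1/γ) log (γ ∫_0^∞ e^{-γx} G(x) dx)`. -/
noncomputable def entropicRiskOfCdf (γ : ℝ) (G : ℝ → ℝ) : ℝ :=
  -(1 / γ) * Real.log (γ * ∫ x in Set.Ioi (0 : ℝ), Real.exp (-γ * x) * G x)

/-- The entropic risk `ERisk_γ(X) = -(1/γ) log E[e^{-γX}]` of a random variable `X`. -/
noncomputable def entropicRisk {Ω : Type*} [MeasurableSpace Ω] (μ : Measure Ω)
    (γ : ℝ) (X : Ω → ℝ) : ℝ :=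
  -(1 / γ) * Real.log (∫ ω, Real.exp (-γ * X ω) ∂μ)

namespace DKWAux
open Real Set Filter


/-- `e^y ≤ 1 + y + (y²/2) e^{|y|}` for all real `y`. -/
lemma exp_le_quad (y : ℝ) : Real.exp y ≤ 1 + y + y ^ 2 / 2 * Real.exp |y| := by
  rcases le_or_gt 0 y with hy | hy
  · rw [abs_of_nonneg hy]
    -- first: h(z) = exp z * (1 - z - z^2/2) is antitone on [0,∞), h 0 = 1
    have h1 : ∀ z ∈ Set.Ici (0:ℝ), Real.exp z * (1 - z - z ^ 2 / 2) ≤ 1 := by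
      have hder : ∀ z : ℝ, HasDerivAt (fun z => Real.exp z * (1 - z - z ^ 2 / 2))
          (Real.exp z * (-2 * z - z ^ 2 / 2)) z := by
        intro z
        have h2 : HasDerivAt (fun z : ℝ => 1 - z - z ^ 2 / 2) (-1 - z) z := by
          have := ((hasDerivAt_pow 2 z).div_const 2)
          have h3 := ((hasDerivAt_id z).const_sub 1).sub this
          exact h3.congr_deriv (by ring)
        have := (Real.hasDerivAt_exp z).mul h2
        exact this.congr_deriv (by ring)
      have hanti : AntitoneOn (fun z => Real.exp z * (1 - z - z ^ 2 / 2)) (Set.Ici 0) := by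
        apply antitoneOn_of_deriv_nonpos (convex_Ici 0)
        · exact (Continuous.mul Real.continuous_exp (by continuity)).continuousOn
        · intro z _
          exact (hder z).differentiableAt.differentiableWithinAt
        · intro z hz
          rw [interior_Ici] at hz
          rw [(hder z).deriv]
          have hz' : (0:ℝ) < z := hz
          have : -2 * z - z ^ 2 / 2 ≤ 0 := by nlinarith
          exact mul_nonpos_of_nonneg_of_nonpos (Real.exp_pos z).le this
      intro z hz
      have := hanti (Set.self_mem_Ici) hz (by exact hz)
      simpa using this
    -- now D(y) = 1 + y + y²/2 e^y - e^y is monotone on [0,∞), D 0 = 0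
    have hD : ∀ z ∈ Set.Ici (0:ℝ), 0 ≤ 1 + z + z ^ 2 / 2 * Real.exp z - Real.exp z := by
      have hder : ∀ z : ℝ, HasDerivAt (fun z => 1 + z + z ^ 2 / 2 * Real.exp z - Real.exp z)
          (1 - Real.exp z * (1 - z - z ^ 2 / 2)) z := by
        intro z
        have hp : HasDerivAt (fun z : ℝ => z ^ 2 / 2) z z := by
          have := (hasDerivAt_pow 2 z).div_const 2
          exact this.congr_deriv (by ring)
        have h4 := (hp.mul (Real.hasDerivAt_exp z))
        have h5 := (((hasDerivAt_const z (1:ℝ)).add (hasDerivAt_id z)).add h4).sub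
          (Real.hasDerivAt_exp z)
        exact h5.congr_deriv (by ring)
      have hmono : MonotoneOn (fun z => 1 + z + z ^ 2 / 2 * Real.exp z - Real.exp z)
          (Set.Ici 0) := by
        apply monotoneOn_of_deriv_nonneg (convex_Ici 0)
        · exact (Continuous.sub (by continuity) Real.continuous_exp).continuousOn
        · intro z _
          exact (hder z).differentiableAt.differentiableWithinAt
        · intro z hz
          rw [interior_Ici] at hz
          rw [(hder z).deriv]
          have := h1 z (Set.mem_Ici.mpr (le_of_lt hz))
          linarith
      intro z hz
      have := hmono (Set.self_mem_Ici) hz hz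
      simpa using this
    have := hD y hy
    linarith
  · have h1 : Real.exp y ≤ 1 + y + y ^ 2 / 2 := by
      have hder : ∀ z : ℝ, HasDerivAt (fun z => 1 + z + z ^ 2 / 2 - Real.exp z)
          (1 + z - Real.exp z) z := by
        intro z
        have hp : HasDerivAt (fun z : ℝ => z ^ 2 / 2) z z := by
          have := (hasDerivAt_pow 2 z).div_const 2
          exact this.congr_deriv (by ring)
        have h5 := (((hasDerivAt_const z (1:ℝ)).add (hasDerivAt_id z)).add hp).sub
          (Real.hasDerivAt_exp z)
        exact h5.congr_deriv (by ring)
      have hanti : AntitoneOn (fun z => 1 + z + z ^ 2 / 2 - Real.exp z) (Set.Iic 0) := by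
        apply antitoneOn_of_deriv_nonpos (convex_Iic 0)
        · exact (Continuous.sub (by continuity) Real.continuous_exp).continuousOn
        · intro z _
          exact (hder z).differentiableAt.differentiableWithinAt
        · intro z hz
          rw [interior_Iic] at hz
          rw [(hder z).deriv]
          have := Real.add_one_le_exp z
          linarith
      have := hanti (Set.mem_Iic.mpr hy.le) (Set.self_mem_Iic) hy.le
      simp only [Real.exp_zero] at this
      linarith
    have h2 : (1:ℝ) ≤ Real.exp |y| := Real.one_le_exp (abs_nonneg y)
    nlinarith [sq_nonneg y]

/-- `∫_{(a,∞)} e^{-γx} dx = e^{-γa}/γ`. -/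
lemma integral_exp_Ioi {γ : ℝ} (hγ : 0 < γ) (a : ℝ) :
    ∫ x in Set.Ioi a, Real.exp (-γ * x) = Real.exp (-γ * a) / γ := by
  have h := integral_comp_mul_left_Ioi (fun x => Real.exp (-x)) a hγ
  simp only [smul_eq_mul, integral_exp_neg_Ioi] at h
  have h2 : (fun x : ℝ => Real.exp (-(γ * x))) = fun x => Real.exp (-γ * x) := by
    ext x; ring_nf
  rw [h2] at h
  rw [h]
  rw [neg_mul]
  ring

lemma integrableOn_exp_Ioi {γ : ℝ} (hγ : 0 < γ) (a : ℝ) :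
    IntegrableOn (fun x => Real.exp (-γ * x)) (Set.Ioi a) :=
  exp_neg_integrableOn_Ioi a hγ

/-- integrability of `e^{-γx} g x` on `(0,∞)` for bounded measurable `g`. -/
lemma integrableOn_exp_mul {γ : ℝ} (hγ : 0 < γ) {g : ℝ → ℝ} {C : ℝ}
    (hg : Measurable g) (hb : ∀ x, |g x| ≤ C) :
    IntegrableOn (fun x => Real.exp (-γ * x) * g x) (Set.Ioi 0) := by
  refine Integrable.mono' ((integrableOn_exp_Ioi hγ 0).const_mul C) ?_ ?_
  · exact ((Real.measurable_exp.comp (measurable_id.const_mul (-γ))).mul hg).aestronglyMeasurable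
  · refine ae_of_all _ fun x => ?_
    rw [Real.norm_eq_abs, abs_mul, abs_of_pos (Real.exp_pos _)]
    calc Real.exp (-γ * x) * |g x| ≤ Real.exp (-γ * x) * C := by
          exact mul_le_mul_of_nonneg_left (hb x) (Real.exp_pos _).le
      _ = C * Real.exp (-γ * x) := by ring


/-- `∫_{(0,∞)} e^{-γx} 1_{v ≤ x} dx = e^{-γ max(v,0)}/γ`. -/
lemma integral_exp_indicator_Ici {γ : ℝ} (hγ : 0 < γ) (v : ℝ) :
    ∫ x in Set.Ioi (0:ℝ), Real.exp (-γ * x) * (if v ≤ x then (1:ℝ) else 0)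
      = Real.exp (-γ * max v 0) / γ := by
  have h1 : (fun x => Real.exp (-γ * x) * (if v ≤ x then (1:ℝ) else 0))
      = (Set.Ici v).indicator (fun x => Real.exp (-γ * x)) := by
    ext x
    by_cases h : v ≤ x <;> simp [Set.indicator_apply, Set.mem_Ici, h]
  rw [h1, MeasureTheory.setIntegral_indicator measurableSet_Ici]
  rcases le_or_gt v 0 with hv | hv
  · have h2 : Set.Ioi (0:ℝ) ∩ Set.Ici v = Set.Ioi 0 := by
      ext x
      simp only [Set.mem_inter_iff, Set.mem_Ioi, Set.mem_Ici, and_iff_left_iff_imp]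
      intro hx
      linarith
    rw [h2, integral_exp_Ioi hγ, max_eq_right hv]
  · have h2 : Set.Ioi (0:ℝ) ∩ Set.Ici v = Set.Ici v := by
      ext x
      simp only [Set.mem_inter_iff, Set.mem_Ioi, Set.mem_Ici, and_iff_right_iff_imp]
      intro hx
      linarith
    rw [h2, MeasureTheory.integral_Ici_eq_integral_Ioi, integral_exp_Ioi hγ,
      max_eq_left hv.le]

/-- `∫_{(0,∞)} e^{-γx} 1_{c < x} dx = e^{-γc}/γ` for `c ≥ 0`. -/
lemma integral_exp_indicator_Ioi {γ : ℝ} (hγ : 0 < γ) {c : ℝ} (hc : 0 ≤ c) :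
    ∫ x in Set.Ioi (0:ℝ), Real.exp (-γ * x) * (if c < x then (1:ℝ) else 0)
      = Real.exp (-γ * c) / γ := by
  have h1 : (fun x => Real.exp (-γ * x) * (if c < x then (1:ℝ) else 0))
      = (Set.Ioi c).indicator (fun x => Real.exp (-γ * x)) := by
    ext x
    by_cases h : c < x <;> simp [Set.indicator_apply, Set.mem_Ioi, h]
  rw [h1, MeasureTheory.setIntegral_indicator measurableSet_Ioi]
  have h2 : Set.Ioi (0:ℝ) ∩ Set.Ioi c = Set.Ioi c := by
    ext x
    simp only [Set.mem_inter_iff, Set.mem_Ioi, and_iff_right_iff_imp]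
    intro hx
    linarith
  rw [h2, integral_exp_Ioi hγ]

/-- `∫_{(0,∞)} e^{-γx} 1_{x < c} dx = (1 - e^{-γc})/γ` for `c ≥ 0`. -/
lemma integral_exp_indicator_lt {γ : ℝ} (hγ : 0 < γ) {c : ℝ} (hc : 0 ≤ c) :
    ∫ x in Set.Ioi (0:ℝ), Real.exp (-γ * x) * (if x < c then (1:ℝ) else 0)
      = (1 - Real.exp (-γ * c)) / γ := by
  have h1 : ∀ x : ℝ, Real.exp (-γ * x) * (if x < c then (1:ℝ) else 0)
      = Real.exp (-γ * x) - Real.exp (-γ * x) * (if c ≤ x then (1:ℝ) else 0) := by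
    intro x
    by_cases h : x < c
    · rw [if_pos h, if_neg (not_le.mpr h)]
      ring
    · rw [if_neg h, if_pos (not_lt.mp h)]
      ring
  rw [show (fun x => Real.exp (-γ * x) * (if x < c then (1:ℝ) else 0))
      = fun x => Real.exp (-γ * x) - Real.exp (-γ * x) * (if c ≤ x then (1:ℝ) else 0) from
    funext h1]
  rw [integral_sub (integrableOn_exp_Ioi hγ 0)
    (integrableOn_exp_mul hγ (C := 1) (Measurable.ite measurableSet_Ici measurable_const
      measurable_const) (fun x => by by_cases h : c ≤ x <;> simp [h]))]
  rw [integral_exp_Ioi hγ, integral_exp_indicator_Ici hγ c, max_eq_left hc]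
  simp only [mul_zero, neg_zero, Real.exp_zero]
  ring_nf

section ECdf
variable {Ω : Type*} (Xs : ℕ → Ω → ℝ) (k : ℕ) (ω : Ω)

lemma empiricalCdf_nonneg (x : ℝ) : 0 ≤ empiricalCdf Xs k ω x := by
  unfold empiricalCdf
  positivity

lemma empiricalCdf_le_one (x : ℝ) : empiricalCdf Xs k ω x ≤ 1 := by
  unfold empiricalCdf
  rcases Nat.eq_zero_or_pos k with hk | hk
  · simp [hk]
  · rw [div_le_one (by positivity)]
    exact_mod_cast Finset.card_le_card (Finset.filter_subset _ _) |>.trans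
      (le_of_eq (Finset.card_range k))

lemma empiricalCdf_mono : Monotone (empiricalCdf Xs k ω) := by
  intro x y hxy
  unfold empiricalCdf
  rcases Nat.eq_zero_or_pos k with hk | hk
  · simp [hk]
  · have hsub : (Finset.filter (fun i => Xs i ω ≤ x) (Finset.range k))
        ⊆ Finset.filter (fun i => Xs i ω ≤ y) (Finset.range k) := by
      intro i hi
      simp only [Finset.mem_filter] at hi ⊢
      exact ⟨hi.1, hi.2.trans hxy⟩
    have := Finset.card_le_card hsub
    gcongr <;> exact_mod_cast this

lemma empiricalCdf_measurable : Measurable (empiricalCdf Xs k ω) :=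
  (empiricalCdf_mono Xs k ω).measurable

/-- empirical cdf as an average of indicators. -/
lemma empiricalCdf_eq_sum (x : ℝ) :
    empiricalCdf Xs k ω x
      = (∑ i ∈ Finset.range k, if Xs i ω ≤ x then (1:ℝ) else 0) / k := by
  unfold empiricalCdf
  congr 1
  rw [Finset.card_filter]
  push_cast
  rfl

/-- the key identity: `∫_{(0,∞)} e^{-γx} F̂(x) dx = (∑ i, e^{-γ max(Xᵢ,0)})/(γ k)`. -/
lemma integral_exp_empiricalCdf {γ : ℝ} (hγ : 0 < γ) (hk : 0 < k) :
    ∫ x in Set.Ioi (0:ℝ), Real.exp (-γ * x) * empiricalCdf Xs k ω x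
      = (∑ i ∈ Finset.range k, Real.exp (-γ * max (Xs i ω) 0)) / (γ * k) := by
  have hmeas : ∀ i : ℕ, Measurable fun x : ℝ => if Xs i ω ≤ x then (1:ℝ) else 0 := fun i =>
    Measurable.ite measurableSet_Ici measurable_const measurable_const
  have hint : ∀ i ∈ Finset.range k,
      IntegrableOn (fun x => Real.exp (-γ * x) * (if Xs i ω ≤ x then (1:ℝ) else 0))
        (Set.Ioi (0:ℝ)) := fun i _ =>
    integrableOn_exp_mul hγ (C := 1) (hmeas i) (fun x => by by_cases h : Xs i ω ≤ x <;> simp [h])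
  calc ∫ x in Set.Ioi (0:ℝ), Real.exp (-γ * x) * empiricalCdf Xs k ω x
      = ∫ x in Set.Ioi (0:ℝ),
          (∑ i ∈ Finset.range k, Real.exp (-γ * x) * (if Xs i ω ≤ x then (1:ℝ) else 0)) / k := by
        congr 1
        ext x
        rw [empiricalCdf_eq_sum, ← Finset.mul_sum, mul_div_assoc]
    _ = (∑ i ∈ Finset.range k,
          ∫ x in Set.Ioi (0:ℝ), Real.exp (-γ * x) * (if Xs i ω ≤ x then (1:ℝ) else 0)) / k := by
        rw [integral_div, integral_finset_sum _ hint]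
    _ = (∑ i ∈ Finset.range k, Real.exp (-γ * max (Xs i ω) 0) / γ) / k := by
        congr 1
        exact Finset.sum_congr rfl fun i _ => integral_exp_indicator_Ici hγ _
    _ = (∑ i ∈ Finset.range k, Real.exp (-γ * max (Xs i ω) 0)) / (γ * k) := by
        rw [← Finset.sum_div]
        ring


end ECdf

section Det
variable {Ω : Type*} {Xs : ℕ → Ω → ℝ} {k : ℕ} {ω : Ω} {γ Δ : ℝ}

/-- integrability of `e^{-γx} min(F̂+Δ,1)` etc. -/
lemma integrableOn_exp_lowband (hγ : 0 < γ) (hΔ : 0 ≤ Δ) :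
    IntegrableOn (fun x => Real.exp (-γ * x) * min (empiricalCdf Xs k ω x + Δ) 1)
      (Set.Ioi 0) := by
  refine integrableOn_exp_mul hγ (C := 1) ?_ ?_
  · exact ((empiricalCdf_measurable Xs k ω).add_const Δ).min measurable_const
  · intro x
    rw [abs_le]
    constructor
    · have := empiricalCdf_nonneg Xs k ω x
      have h2 : (0:ℝ) ≤ min (empiricalCdf Xs k ω x + Δ) 1 :=
        le_min (by linarith) one_pos.le
      linarith
    · exact min_le_right _ _

lemma integrableOn_exp_upband (hγ : 0 < γ) (hΔ : 0 ≤ Δ) :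
    IntegrableOn (fun x => Real.exp (-γ * x) * max (empiricalCdf Xs k ω x - Δ) 0)
      (Set.Ioi 0) := by
  refine integrableOn_exp_mul hγ (C := 1) ?_ ?_
  · exact ((empiricalCdf_measurable Xs k ω).sub_const Δ).max measurable_const
  · intro x
    rw [abs_le]
    refine ⟨by
      have h2 : (0:ℝ) ≤ max (empiricalCdf Xs k ω x - Δ) 0 := le_max_right _ _
      linarith, ?_⟩
    have := empiricalCdf_le_one Xs k ω x
    exact max_le (by linarith) one_pos.le

lemma integrableOn_exp_ecdf (hγ : 0 < γ) :
    IntegrableOn (fun x => Real.exp (-γ * x) * empiricalCdf Xs k ω x) (Set.Ioi 0) :=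
  integrableOn_exp_mul hγ (C := 1) (empiricalCdf_measurable Xs k ω)
    (fun x => abs_le.mpr ⟨by have := empiricalCdf_nonneg Xs k ω x; linarith,
      empiricalCdf_le_one Xs k ω x⟩)

/-- DET1: lower band gains `Δ(1-e^{-γc})/γ` under the count condition. -/
lemma lowband_ge (hγ : 0 < γ) (hΔ : 0 ≤ Δ) {c : ℝ} (hc : 0 ≤ c) (hk : 0 < k)
    (hcount : (k:ℝ) * Δ ≤ ((Finset.range k).filter fun i => c < Xs i ω).card) :
    (∫ x in Set.Ioi (0:ℝ), Real.exp (-γ * x) * empiricalCdf Xs k ω x)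
        + Δ * (1 - Real.exp (-γ * c)) / γ
      ≤ ∫ x in Set.Ioi (0:ℝ), Real.exp (-γ * x) * min (empiricalCdf Xs k ω x + Δ) 1 := by
  have hkR : (0:ℝ) < k := by exact_mod_cast hk
  have hstep : ∀ x ∈ Set.Ioi (0:ℝ),
      Real.exp (-γ * x) * empiricalCdf Xs k ω x
          + Δ * (Real.exp (-γ * x) * (if x < c then (1:ℝ) else 0))
        ≤ Real.exp (-γ * x) * min (empiricalCdf Xs k ω x + Δ) 1 := by
    intro x _
    by_cases hx : x < c
    · rw [if_pos hx]
      have hle1 : empiricalCdf Xs k ω x + Δ ≤ 1 := by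
        have hsub : ((Finset.range k).filter fun i => Xs i ω ≤ x)
            ⊆ Finset.range k \ ((Finset.range k).filter fun i => c < Xs i ω) := by
          intro i hi
          simp only [Finset.mem_filter, Finset.mem_sdiff] at hi ⊢
          exact ⟨hi.1, fun hmem => absurd hmem.2 (not_lt.mpr (hi.2.trans hx.le))⟩
        have hcard := Finset.card_le_card hsub
        rw [Finset.card_sdiff_of_subset (Finset.filter_subset _ _), Finset.card_range] at hcard
        have hcast : (((Finset.range k).filter fun i => Xs i ω ≤ x).card : ℝ)
            ≤ (k:ℝ) - (((Finset.range k).filter fun i => c < Xs i ω).card : ℝ) := by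
          have hle : (((Finset.range k).filter fun i => c < Xs i ω).card) ≤ k := by
            exact (Finset.card_filter_le _ _).trans (le_of_eq (Finset.card_range k))
          have := (Nat.cast_le (α := ℝ)).mpr hcard
          rwa [Nat.cast_sub hle] at this
        unfold empiricalCdf
        rw [div_add' _ _ _ hkR.ne', div_le_one hkR]
        nlinarith
      rw [min_eq_left hle1]
      ring_nf
      nlinarith [Real.exp_pos (-(γ * x)), Real.exp_pos (-γ * x)]
    · rw [if_neg hx, mul_zero, mul_zero, add_zero]
      have h1 : empiricalCdf Xs k ω x ≤ min (empiricalCdf Xs k ω x + Δ) 1 :=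
        le_min (by linarith) (empiricalCdf_le_one Xs k ω x)
      exact mul_le_mul_of_nonneg_left h1 (Real.exp_pos _).le
  have hintl : IntegrableOn (fun x => Real.exp (-γ * x) * empiricalCdf Xs k ω x
      + Δ * (Real.exp (-γ * x) * (if x < c then (1:ℝ) else 0))) (Set.Ioi 0) := by
    refine (integrableOn_exp_ecdf hγ).add (Integrable.const_mul ?_ Δ)
    exact integrableOn_exp_mul hγ (C := 1)
      (Measurable.ite measurableSet_Iio measurable_const measurable_const)
      (fun x => by by_cases h : x < c <;> simp [h])
  have := setIntegral_mono_on hintl (integrableOn_exp_lowband hγ hΔ)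
    measurableSet_Ioi hstep
  rw [integral_add (integrableOn_exp_ecdf hγ) (Integrable.const_mul (integrableOn_exp_mul hγ
      (C := 1) (Measurable.ite measurableSet_Iio measurable_const measurable_const)
      (fun x => by by_cases h : x < c <;> simp [h])) Δ)] at this
  rw [integral_const_mul, integral_exp_indicator_lt hγ hc] at this
  calc (∫ x in Set.Ioi (0:ℝ), Real.exp (-γ * x) * empiricalCdf Xs k ω x)
        + Δ * (1 - Real.exp (-γ * c)) / γ
      = (∫ x in Set.Ioi (0:ℝ), Real.exp (-γ * x) * empiricalCdf Xs k ω x)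
        + Δ * ((1 - Real.exp (-γ * c)) / γ) := by ring
    _ ≤ _ := this

/-- DET2: lower band is at most `∫ e F̂ + Δ/γ`. -/
lemma lowband_le (hγ : 0 < γ) (hΔ : 0 ≤ Δ) :
    (∫ x in Set.Ioi (0:ℝ), Real.exp (-γ * x) * min (empiricalCdf Xs k ω x + Δ) 1)
      ≤ (∫ x in Set.Ioi (0:ℝ), Real.exp (-γ * x) * empiricalCdf Xs k ω x) + Δ / γ := by
  have hstep : ∀ x ∈ Set.Ioi (0:ℝ),
      Real.exp (-γ * x) * min (empiricalCdf Xs k ω x + Δ) 1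
        ≤ Real.exp (-γ * x) * empiricalCdf Xs k ω x + Δ * Real.exp (-γ * x) := by
    intro x _
    have h1 : min (empiricalCdf Xs k ω x + Δ) 1 ≤ empiricalCdf Xs k ω x + Δ := min_le_left _ _
    nlinarith [Real.exp_pos (-γ * x), (Real.exp_pos (-γ * x)).le]
  have hintr : IntegrableOn (fun x => Real.exp (-γ * x) * empiricalCdf Xs k ω x
      + Δ * Real.exp (-γ * x)) (Set.Ioi 0) :=
    (integrableOn_exp_ecdf hγ).add ((integrableOn_exp_Ioi hγ 0).const_mul Δ)
  have h2 := setIntegral_mono_on (integrableOn_exp_lowband hγ hΔ) hintr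
    measurableSet_Ioi hstep
  rw [integral_add (integrableOn_exp_ecdf hγ) ((integrableOn_exp_Ioi hγ 0).const_mul Δ),
    integral_const_mul, integral_exp_Ioi hγ] at h2
  calc (∫ x in Set.Ioi (0:ℝ), Real.exp (-γ * x) * min (empiricalCdf Xs k ω x + Δ) 1)
      ≤ (∫ x in Set.Ioi (0:ℝ), Real.exp (-γ * x) * empiricalCdf Xs k ω x)
        + Δ * (Real.exp (-γ * 0) / γ) := h2
    _ = (∫ x in Set.Ioi (0:ℝ), Real.exp (-γ * x) * empiricalCdf Xs k ω x) + Δ / γ := by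
        norm_num
        ring

/-- DET3: upper band loses `Δ e^{-γ c'}/γ` under the count condition. -/
lemma upband_le (hγ : 0 < γ) (hΔ : 0 ≤ Δ) {c' : ℝ} (hc' : 0 ≤ c') (hk : 0 < k)
    (hcount : (k:ℝ) * Δ ≤ ((Finset.range k).filter fun i => Xs i ω ≤ c').card) :
    (∫ x in Set.Ioi (0:ℝ), Real.exp (-γ * x) * max (empiricalCdf Xs k ω x - Δ) 0)
      ≤ (∫ x in Set.Ioi (0:ℝ), Real.exp (-γ * x) * empiricalCdf Xs k ω x)
        - Δ * Real.exp (-γ * c') / γ := by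
  have hkR : (0:ℝ) < k := by exact_mod_cast hk
  have hstep : ∀ x ∈ Set.Ioi (0:ℝ),
      Real.exp (-γ * x) * max (empiricalCdf Xs k ω x - Δ) 0
        ≤ Real.exp (-γ * x) * empiricalCdf Xs k ω x
          - Δ * (Real.exp (-γ * x) * (if c' < x then (1:ℝ) else 0)) := by
    intro x _
    by_cases hx : c' < x
    · rw [if_pos hx]
      have hge : Δ ≤ empiricalCdf Xs k ω x := by
        have hsub : ((Finset.range k).filter fun i => Xs i ω ≤ c')
            ⊆ ((Finset.range k).filter fun i => Xs i ω ≤ x) := by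
          intro i hi
          simp only [Finset.mem_filter] at hi ⊢
          exact ⟨hi.1, hi.2.trans hx.le⟩
        have hcard := (Nat.cast_le (α := ℝ)).mpr (Finset.card_le_card hsub)
        unfold empiricalCdf
        rw [le_div_iff₀ hkR]
        nlinarith
      rw [max_eq_left (by linarith)]
      ring_nf
      nlinarith [Real.exp_pos (-(γ * x)), Real.exp_pos (-γ * x)]
    · rw [if_neg hx, mul_zero, mul_zero, sub_zero]
      have h1 : max (empiricalCdf Xs k ω x - Δ) 0 ≤ empiricalCdf Xs k ω x :=
        max_le (by linarith) (empiricalCdf_nonneg Xs k ω x)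
      exact mul_le_mul_of_nonneg_left h1 (Real.exp_pos _).le
  have hind : IntegrableOn (fun x => Real.exp (-γ * x) * (if c' < x then (1:ℝ) else 0))
      (Set.Ioi 0) := integrableOn_exp_mul hγ (C := 1)
    (Measurable.ite measurableSet_Ioi measurable_const measurable_const)
    (fun x => by by_cases h : c' < x <;> simp [h])
  have hintr : IntegrableOn (fun x => Real.exp (-γ * x) * empiricalCdf Xs k ω x
      - Δ * (Real.exp (-γ * x) * (if c' < x then (1:ℝ) else 0))) (Set.Ioi 0) :=
    (integrableOn_exp_ecdf hγ).sub (hind.const_mul Δ)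
  have h2 := setIntegral_mono_on (integrableOn_exp_upband hγ hΔ) hintr
    measurableSet_Ioi hstep
  rw [integral_sub (integrableOn_exp_ecdf hγ) (hind.const_mul Δ),
    integral_const_mul, integral_exp_indicator_Ioi hγ hc'] at h2
  calc (∫ x in Set.Ioi (0:ℝ), Real.exp (-γ * x) * max (empiricalCdf Xs k ω x - Δ) 0)
      ≤ _ := h2
    _ = (∫ x in Set.Ioi (0:ℝ), Real.exp (-γ * x) * empiricalCdf Xs k ω x)
        - Δ * Real.exp (-γ * c') / γ := by ring

/-- DET4: upper band is at least `∫ e F̂ - Δ/γ`. -/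
lemma upband_ge (hγ : 0 < γ) (hΔ : 0 ≤ Δ) :
    (∫ x in Set.Ioi (0:ℝ), Real.exp (-γ * x) * empiricalCdf Xs k ω x) - Δ / γ
      ≤ ∫ x in Set.Ioi (0:ℝ), Real.exp (-γ * x) * max (empiricalCdf Xs k ω x - Δ) 0 := by
  have hstep : ∀ x ∈ Set.Ioi (0:ℝ),
      Real.exp (-γ * x) * empiricalCdf Xs k ω x - Δ * Real.exp (-γ * x)
        ≤ Real.exp (-γ * x) * max (empiricalCdf Xs k ω x - Δ) 0 := by
    intro x _
    have h1 : empiricalCdf Xs k ω x - Δ ≤ max (empiricalCdf Xs k ω x - Δ) 0 := le_max_left _ _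
    nlinarith [Real.exp_pos (-γ * x), (Real.exp_pos (-γ * x)).le]
  have hintl : IntegrableOn (fun x => Real.exp (-γ * x) * empiricalCdf Xs k ω x
      - Δ * Real.exp (-γ * x)) (Set.Ioi 0) :=
    (integrableOn_exp_ecdf hγ).sub ((integrableOn_exp_Ioi hγ 0).const_mul Δ)
  have h2 := setIntegral_mono_on hintl (integrableOn_exp_upband hγ hΔ)
    measurableSet_Ioi hstep
  rw [integral_sub (integrableOn_exp_ecdf hγ) ((integrableOn_exp_Ioi hγ 0).const_mul Δ),
    integral_const_mul, integral_exp_Ioi hγ] at h2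
  calc (∫ x in Set.Ioi (0:ℝ), Real.exp (-γ * x) * empiricalCdf Xs k ω x) - Δ / γ
      = (∫ x in Set.Ioi (0:ℝ), Real.exp (-γ * x) * empiricalCdf Xs k ω x)
        - Δ * (Real.exp (-γ * 0) / γ) := by
        norm_num
        ring
    _ ≤ _ := h2

/-- DET0a: lower band dominates `∫ e F̂` unconditionally. -/
lemma lowband_ge0 (hγ : 0 < γ) (hΔ : 0 ≤ Δ) :
    (∫ x in Set.Ioi (0:ℝ), Real.exp (-γ * x) * empiricalCdf Xs k ω x)
      ≤ ∫ x in Set.Ioi (0:ℝ), Real.exp (-γ * x) * min (empiricalCdf Xs k ω x + Δ) 1 := by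
  refine setIntegral_mono_on (integrableOn_exp_ecdf hγ) (integrableOn_exp_lowband hγ hΔ)
    measurableSet_Ioi fun x _ => ?_
  have h1 : empiricalCdf Xs k ω x ≤ min (empiricalCdf Xs k ω x + Δ) 1 :=
    le_min (by linarith) (empiricalCdf_le_one Xs k ω x)
  exact mul_le_mul_of_nonneg_left h1 (Real.exp_pos _).le

/-- DET0b: upper band is dominated by `∫ e F̂` unconditionally. -/
lemma upband_le0 (hγ : 0 < γ) (hΔ : 0 ≤ Δ) :
    (∫ x in Set.Ioi (0:ℝ), Real.exp (-γ * x) * max (empiricalCdf Xs k ω x - Δ) 0)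
      ≤ ∫ x in Set.Ioi (0:ℝ), Real.exp (-γ * x) * empiricalCdf Xs k ω x := by
  refine setIntegral_mono_on (integrableOn_exp_upband hγ hΔ) (integrableOn_exp_ecdf hγ)
    measurableSet_Ioi fun x _ => ?_
  have h1 : max (empiricalCdf Xs k ω x - Δ) 0 ≤ empiricalCdf Xs k ω x :=
    max_le (by linarith) (empiricalCdf_nonneg Xs k ω x)
  exact mul_le_mul_of_nonneg_left h1 (Real.exp_pos _).le

end Det

variable {Ω : Type*} [MeasurableSpace Ω] {μ : Measure Ω} [IsProbabilityMeasure μ]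

lemma integrable_of_bounded {ξ : Ω → ℝ} (hm : Measurable ξ) {C : ℝ}
    (hbd : ∀ ω, |ξ ω| ≤ C) : Integrable ξ μ := by
  refine Integrable.mono' (integrable_const C) hm.aestronglyMeasurable ?_
  exact ae_of_all _ fun ω => by simpa using hbd ω

lemma integrable_exp_comp {ξ : Ω → ℝ} (hm : Measurable ξ) {C : ℝ}
    (hbd : ∀ ω, |ξ ω| ≤ C) (τ : ℝ) :
    Integrable (fun ω => Real.exp (τ * ξ ω)) μ := by
  refine Integrable.mono' (integrable_const (Real.exp (|τ| * C))) ?_ ?_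
  · exact (Real.measurable_exp.comp (hm.const_mul τ)).aestronglyMeasurable
  · refine ae_of_all _ fun ω => ?_
    rw [Real.norm_eq_abs, abs_of_pos (Real.exp_pos _)]
    apply Real.exp_le_exp.mpr
    calc τ * ξ ω ≤ |τ * ξ ω| := le_abs_self _
      _ = |τ| * |ξ ω| := abs_mul _ _
      _ ≤ |τ| * C := mul_le_mul_of_nonneg_left (hbd ω) (abs_nonneg τ)

/-- mgf bound for a centered bounded variable with second moment at most `v`. -/
lemma mgf_le_of_bounded {ξ : Ω → ℝ} (hm : Measurable ξ)
    (hbd : ∀ ω, |ξ ω| ≤ 1) (hmean : ∫ ω, ξ ω ∂μ = 0)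
    {v : ℝ} (hv : 0 ≤ v) (hvar : ∫ ω, (ξ ω) ^ 2 ∂μ ≤ v) (τ : ℝ) :
    mgf ξ μ τ ≤ Real.exp (τ ^ 2 / 2 * Real.exp |τ| * v) := by
  have hint1 : Integrable ξ μ := integrable_of_bounded hm hbd
  have hint2 : Integrable (fun ω => (ξ ω) ^ 2) μ := by
    refine integrable_of_bounded (hm.pow_const 2) (C := 1) fun ω => ?_
    rw [abs_pow]
    exact pow_le_one₀ (abs_nonneg _) (hbd ω)
  have hpt : ∀ ω, Real.exp (τ * ξ ω)
      ≤ 1 + τ * ξ ω + τ ^ 2 / 2 * Real.exp |τ| * (ξ ω) ^ 2 := by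
    intro ω
    have h1 := exp_le_quad (τ * ξ ω)
    have h2 : |τ * ξ ω| ≤ |τ| := by
      rw [abs_mul]
      nlinarith [abs_nonneg τ, hbd ω, abs_nonneg (ξ ω)]
    have h3 : Real.exp |τ * ξ ω| ≤ Real.exp |τ| := Real.exp_le_exp.mpr h2
    have h4 : (τ * ξ ω) ^ 2 / 2 * Real.exp |τ * ξ ω|
        ≤ (τ * ξ ω) ^ 2 / 2 * Real.exp |τ| :=
      mul_le_mul_of_nonneg_left h3 (by positivity)
    nlinarith [sq_nonneg (τ * ξ ω)]
  have hia : Integrable (fun ω => 1 + τ * ξ ω) μ := by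
    have := (integrable_const (1:ℝ) (μ := μ)).add (hint1.const_mul τ)
    exact this
  have hib : Integrable (fun ω => τ ^ 2 / 2 * Real.exp |τ| * (ξ ω) ^ 2) μ :=
    hint2.const_mul _
  have hintr : Integrable (fun ω => 1 + τ * ξ ω + τ ^ 2 / 2 * Real.exp |τ| * (ξ ω) ^ 2) μ :=
    hia.add hib
  have hmono := integral_mono (integrable_exp_comp hm hbd τ) hintr hpt
  have e1 : ∫ ω, (1 + τ * ξ ω + τ ^ 2 / 2 * Real.exp |τ| * (ξ ω) ^ 2) ∂μ
      = 1 + τ ^ 2 / 2 * Real.exp |τ| * ∫ ω, (ξ ω) ^ 2 ∂μ := by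
    rw [integral_add hia hib,
      integral_add (integrable_const 1) (hint1.const_mul τ), integral_const,
      integral_const_mul, integral_const_mul, hmean]
    simp
  rw [e1] at hmono
  have h5 : τ ^ 2 / 2 * Real.exp |τ| * (∫ ω, (ξ ω) ^ 2 ∂μ) ≤ τ ^ 2 / 2 * Real.exp |τ| * v :=
    mul_le_mul_of_nonneg_left hvar (by positivity)
  have h6 : (1:ℝ) + τ ^ 2 / 2 * Real.exp |τ| * v ≤ Real.exp (τ ^ 2 / 2 * Real.exp |τ| * v) := by
    have := Real.add_one_le_exp (τ ^ 2 / 2 * Real.exp |τ| * v)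
    linarith
  calc mgf ξ μ τ = ∫ ω, Real.exp (τ * ξ ω) ∂μ := rfl
    _ ≤ 1 + τ ^ 2 / 2 * Real.exp |τ| * (∫ ω, (ξ ω) ^ 2 ∂μ) := hmono
    _ ≤ 1 + τ ^ 2 / 2 * Real.exp |τ| * v := by linarith
    _ ≤ Real.exp (τ ^ 2 / 2 * Real.exp |τ| * v) := h6

/-- Chernoff bound for the lower tail of a sum of iid-like centered bounded variables. -/
lemma chernoff_aux (ξ : ℕ → Ω → ℝ) (hm : ∀ i, Measurable (ξ i))
    (hind : iIndepFun ξ μ)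
    (hbd : ∀ i ω, |ξ i ω| ≤ 1) (hmean : ∀ i, ∫ ω, ξ i ω ∂μ = 0)
    {v : ℝ} (hv : 0 ≤ v) (hvar : ∀ i, ∫ ω, (ξ i ω) ^ 2 ∂μ ≤ v)
    (k : ℕ) (s t : ℝ) (ht : 0 ≤ t) :
    (μ {ω | ∑ i ∈ Finset.range k, ξ i ω ≤ -s}).toReal
      ≤ Real.exp (-(t * s) + k * (t ^ 2 / 2 * Real.exp t * v)) := by
  have hSm : Measurable (∑ i ∈ Finset.range k, ξ i) := by
    have h := Finset.measurable_sum (f := ξ) (Finset.range k) (fun i _ => hm i)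
    convert h using 1
    ext ω
    simp [Finset.sum_apply]
  have hSbd : ∀ ω, |(∑ i ∈ Finset.range k, ξ i) ω| ≤ (k:ℝ) := by
    intro ω
    rw [Finset.sum_apply]
    refine (Finset.abs_sum_le_sum_abs _ _).trans ?_
    calc ∑ i ∈ Finset.range k, |ξ i ω| ≤ ∑ _i ∈ Finset.range k, (1:ℝ) :=
          Finset.sum_le_sum fun i _ => hbd i ω
      _ = k := by simp
  have hchern := measure_le_le_exp_mul_mgf (μ := μ) (X := ∑ i ∈ Finset.range k, ξ i)
    (t := -t) (-s) (neg_nonpos.mpr ht) (integrable_exp_comp hSm hSbd (-t))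
  have hset : {ω | (∑ i ∈ Finset.range k, ξ i) ω ≤ -s}
      = {ω | ∑ i ∈ Finset.range k, ξ i ω ≤ -s} := by
    ext ω
    simp [Finset.sum_apply]
  rw [hset] at hchern
  refine hchern.trans ?_
  rw [(hind.mgf_sum hm (Finset.range k))]
  have habs : |(-t)| = t := by rw [abs_neg, abs_of_nonneg ht]
  have hone : ∀ i ∈ Finset.range k, mgf (ξ i) μ (-t) ≤ Real.exp (t ^ 2 / 2 * Real.exp t * v) := by
    intro i _
    have := mgf_le_of_bounded (hm i) (hbd i) (hmean i) hv (hvar i) (-t)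
    rwa [habs, neg_sq] at this
  have hprod : (∏ i ∈ Finset.range k, mgf (ξ i) μ (-t))
      ≤ Real.exp (t ^ 2 / 2 * Real.exp t * v) ^ k := by
    calc (∏ i ∈ Finset.range k, mgf (ξ i) μ (-t))
        ≤ ∏ _i ∈ Finset.range k, Real.exp (t ^ 2 / 2 * Real.exp t * v) :=
          Finset.prod_le_prod (fun i _ => mgf_nonneg) hone
      _ = Real.exp (t ^ 2 / 2 * Real.exp t * v) ^ k := by
          rw [Finset.prod_const, Finset.card_range]
  calc Real.exp (-(-t) * (-s)) * ∏ i ∈ Finset.range k, mgf (ξ i) μ (-t)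
      ≤ Real.exp (-(-t) * (-s)) * Real.exp (t ^ 2 / 2 * Real.exp t * v) ^ k :=
        mul_le_mul_of_nonneg_left hprod (Real.exp_pos _).le
    _ = Real.exp (-(t * s) + k * (t ^ 2 / 2 * Real.exp t * v)) := by
        rw [← Real.exp_nat_mul, ← Real.exp_add]
        congr 1
        ring

/-- Chebyshev bound for the count event. -/
lemma count_chebyshev (Z : ℕ → Ω → ℝ) (hm : ∀ i, Measurable (Z i))
    (hpair : ∀ i j : ℕ, i ≠ j → IndepFun (Z i) (Z j) μ)
    (hbd : ∀ i ω, Z i ω ∈ Set.Icc (0:ℝ) 1)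
    {p : ℝ} (hmean : ∀ i, ∫ ω, Z i ω ∂μ = p)
    (hp : 0 < p) {k : ℕ} (hk : 0 < k) {r : ℝ} (hr : r ≤ (k:ℝ) * p / 2) :
    μ {ω | ∑ i ∈ Finset.range k, Z i ω < r} ≤ ENNReal.ofReal (1 / (k * p ^ 2)) := by
  have hkR : (0:ℝ) < k := by exact_mod_cast hk
  have habs : ∀ i ω, |Z i ω| ≤ 1 := fun i ω => by
    have := hbd i ω
    rw [abs_le]
    constructor <;> [linarith [this.1]; exact this.2]
  have hmem : ∀ i, MemLp (Z i) 2 μ := fun i =>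
    memLp_of_bounded (ae_of_all _ (hbd i)) (hm i).aestronglyMeasurable 2
  have hW : MemLp (∑ i ∈ Finset.range k, Z i) 2 μ :=
    memLp_finset_sum' _ (fun i _ => hmem i)
  have hmW : ∫ ω, (∑ i ∈ Finset.range k, Z i) ω ∂μ = k * p := by
    simp_rw [Finset.sum_apply]
    rw [integral_finset_sum _ (fun i _ => integrable_of_bounded (hm i) (habs i))]
    simp [hmean]
  have hvarW : variance (∑ i ∈ Finset.range k, Z i) μ ≤ k / 4 := by
    rw [IndepFun.variance_sum (fun i _ => hmem i)
      (fun i _ j _ hij => hpair i j hij)]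
    calc ∑ i ∈ Finset.range k, variance (Z i) μ
        ≤ ∑ _i ∈ Finset.range k, (1:ℝ)/4 := by
          refine Finset.sum_le_sum fun i _ => ?_
          have h := variance_le_sq_of_bounded (μ := μ) (a := 0) (b := 1)
            (ae_of_all _ (hbd i)) (hm i).aemeasurable
          calc variance (Z i) μ ≤ ((1 - 0)/2)^2 := h
            _ = 1/4 := by norm_num
      _ = k / 4 := by
          rw [Finset.sum_const, Finset.card_range]
          ring
  have hcheb := meas_ge_le_variance_div_sq (μ := μ) hW
    (c := (k:ℝ) * p / 2) (by positivity)
  have hsub : {ω | ∑ i ∈ Finset.range k, Z i ω < r}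
      ⊆ {ω | (k:ℝ) * p / 2
          ≤ |(∑ i ∈ Finset.range k, Z i) ω - ∫ x, (∑ i ∈ Finset.range k, Z i) x ∂μ|} := by
    intro ω hω
    simp only [Set.mem_setOf_eq] at hω ⊢
    rw [hmW, Finset.sum_apply]
    have h1 : (k:ℝ) * p / 2 ≤ (k:ℝ) * p - ∑ i ∈ Finset.range k, Z i ω := by linarith
    calc (k:ℝ) * p / 2 ≤ (k:ℝ) * p - ∑ i ∈ Finset.range k, Z i ω := h1
      _ ≤ |(k:ℝ) * p - ∑ i ∈ Finset.range k, Z i ω| := le_abs_self _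
      _ = |∑ i ∈ Finset.range k, Z i ω - (k:ℝ) * p| := abs_sub_comm _ _
  refine (measure_mono hsub).trans (hcheb.trans ?_)
  apply ENNReal.ofReal_le_ofReal
  calc variance (∑ i ∈ Finset.range k, Z i) μ / ((k:ℝ) * p / 2) ^ 2
      ≤ ((k:ℝ) / 4) / ((k:ℝ) * p / 2) ^ 2 := by
        gcongr
    _ = 1 / (k * p ^ 2) := by
        field_simp
        ring


/-- variance of a `(0,1]`-valued variable is strictly less than `1/4` when positive. -/
lemma var_lt_quarter {Y : Ω → ℝ} (hm : Measurable Y) (hb : ∀ ω, Y ω ∈ Set.Ioc (0:ℝ) 1)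
    (hv : 0 < variance Y μ) : variance Y μ < 1/4 := by
  have habs : ∀ ω, |Y ω| ≤ 1 := fun ω => abs_le.mpr ⟨by linarith [(hb ω).1], (hb ω).2⟩
  have hmem : MemLp Y 2 μ :=
    memLp_of_bounded (ae_of_all _ fun ω => ⟨(hb ω).1.le, (hb ω).2⟩) hm.aestronglyMeasurable 2
  have hint1 : Integrable Y μ := integrable_of_bounded hm habs
  have hint2 : Integrable (fun ω => Y ω ^ 2) μ := by
    refine integrable_of_bounded (hm.pow_const 2) (C := 1) fun ω => ?_
    rw [abs_pow]
    exact pow_le_one₀ (abs_nonneg _) (habs ω)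
  have hintw : Integrable (fun ω => Y ω * (1 - Y ω)) μ := by
    refine integrable_of_bounded (hm.mul ((measurable_const.sub hm))) (C := 1) fun ω => ?_
    have h1 := (hb ω).1
    have h2 := (hb ω).2
    rw [abs_mul]
    have : |Y ω| ≤ 1 := habs ω
    have : |1 - Y ω| ≤ 1 := abs_le.mpr ⟨by linarith, by linarith⟩
    nlinarith [abs_nonneg (Y ω), abs_nonneg (1 - Y ω)]
  set m := ∫ ω, Y ω ∂μ with hmdef
  set w := ∫ ω, Y ω * (1 - Y ω) ∂μ with hwdef
  have hw0 : 0 ≤ w := integral_nonneg fun ω =>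
    mul_nonneg (hb ω).1.le (by linarith [(hb ω).2])
  have hsq : ∫ ω, Y ω ^ 2 ∂μ = m - w := by
    have : ∀ ω, Y ω ^ 2 = Y ω - Y ω * (1 - Y ω) := fun ω => by ring
    rw [show (fun ω => Y ω ^ 2) = fun ω => Y ω - Y ω * (1 - Y ω) from funext this]
    rw [integral_sub hint1 hintw]
  have hvd : variance Y μ = m - w - m ^ 2 := by
    rw [variance_eq_sub hmem]
    have : ∫ ω, (Y ^ 2) ω ∂μ = ∫ ω, Y ω ^ 2 ∂μ := by
      congr 1
    rw [this, hsq]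
  by_cases hw : w = 0
  · exfalso
    have hae : ∀ᵐ ω ∂μ, Y ω * (1 - Y ω) = 0 := by
      have := (integral_eq_zero_iff_of_nonneg
        (fun ω => mul_nonneg (hb ω).1.le (by linarith [(hb ω).2])) hintw).mp (hwdef ▸ hw)
      filter_upwards [this] with ω hω using hω
    have hae1 : Y =ᵐ[μ] fun _ => 1 := by
      filter_upwards [hae] with ω hω
      rcases mul_eq_zero.mp hω with h | h
      · exact absurd h (hb ω).1.ne'
      · linarith
    have hm1 : m = 1 := by
      rw [hmdef, integral_congr_ae hae1, integral_const]
      simp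
    rw [hvd, hm1] at hv
    simp at hv
    linarith [hw0, hv]
  · have hwpos : 0 < w := lt_of_le_of_ne hw0 (Ne.symm hw)
    rw [hvd]
    nlinarith [sq_nonneg (2 * m - 1)]

/-- if `θ² < 4 Var Y` then `P(θ ≤ Y) > 0`. -/
lemma meas_pos_upper {Y : Ω → ℝ} (hm : Measurable Y) (hb : ∀ ω, Y ω ∈ Set.Ioc (0:ℝ) 1)
    {θ : ℝ} (hθ : θ ^ 2 < 4 * variance Y μ) : 0 < μ {ω | θ ≤ Y ω} := by
  by_contra h
  push_neg at h
  have h0 : μ {ω | θ ≤ Y ω} = 0 := le_antisymm h (zero_le ..)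
  have hae : ∀ᵐ ω ∂μ, Y ω ∈ Set.Icc (0:ℝ) θ := by
    have : ∀ᵐ ω ∂μ, ¬ (θ ≤ Y ω) := by
      rw [ae_iff]
      simpa using h0
    filter_upwards [this] with ω hω
    exact ⟨(hb ω).1.le, (not_le.mp hω).le⟩
  have := variance_le_sq_of_bounded (μ := μ) hae hm.aemeasurable
  nlinarith

/-- if `θ² < 4 Var Y` then `P(Y < 1 - θ) > 0`. -/
lemma meas_pos_lower {Y : Ω → ℝ} (hm : Measurable Y) (hb : ∀ ω, Y ω ∈ Set.Ioc (0:ℝ) 1)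
    {θ : ℝ} (hθ : θ ^ 2 < 4 * variance Y μ) : 0 < μ {ω | Y ω < 1 - θ} := by
  by_contra h
  push_neg at h
  have h0 : μ {ω | Y ω < 1 - θ} = 0 := le_antisymm h (zero_le ..)
  have hae : ∀ᵐ ω ∂μ, Y ω ∈ Set.Icc (1 - θ) 1 := by
    have : ∀ᵐ ω ∂μ, ¬ (Y ω < 1 - θ) := by
      rw [ae_iff]
      have he : {a | ¬¬(Y a < 1 - θ)} = {ω | Y ω < 1 - θ} := by
        ext a
        rw [Set.mem_setOf_eq, Set.mem_setOf_eq, not_not]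
      rw [he]
      exact h0
    filter_upwards [this] with ω hω
    exact ⟨not_lt.mp hω, (hb ω).2⟩
  have := variance_le_sq_of_bounded (μ := μ) hae hm.aemeasurable
  nlinarith

/-- key threshold: some `θ` strictly between `2√v` and `1` has a usable band event. -/
lemma exists_theta {Y : Ω → ℝ} (hm : Measurable Y) (hb : ∀ ω, Y ω ∈ Set.Ioc (0:ℝ) 1)
    (hv : 0 < variance Y μ) :
    ∃ θ : ℝ, 2 * Real.sqrt (variance Y μ) < θ ∧ θ < 1 ∧
      (0 < μ {ω | Y ω < 1 - θ} ∨ 0 < μ {ω | θ ≤ Y ω}) := by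
  set v := variance Y μ with hvdef
  set σ := Real.sqrt v with hσdef
  have hσpos : 0 < σ := Real.sqrt_pos.mpr hv
  have hσ2 : σ ^ 2 = v := Real.sq_sqrt hv.le
  have hv4 : v < 1/4 := var_lt_quarter hm hb hv
  have hσhalf : σ < 1/2 := by nlinarith
  refine ⟨(6 * σ + 1)/4, by nlinarith, by nlinarith, ?_⟩
  by_contra hcon
  push_neg at hcon
  obtain ⟨h1, h2⟩ := hcon
  have h10 : μ {ω | Y ω < 1 - (6 * σ + 1)/4} = 0 := le_antisymm h1 (zero_le ..)
  have h20 : μ {ω | (6 * σ + 1)/4 ≤ Y ω} = 0 := le_antisymm h2 (zero_le ..)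
  have hae1 : ∀ᵐ ω ∂μ, ¬ (Y ω < 1 - (6 * σ + 1)/4) := by
    rw [ae_iff]
    have he : {a | ¬¬(Y a < 1 - (6 * σ + 1)/4)} = {ω | Y ω < 1 - (6 * σ + 1)/4} := by
      ext a
      rw [Set.mem_setOf_eq, Set.mem_setOf_eq, not_not]
    rw [he]
    exact h10
  have hae2 : ∀ᵐ ω ∂μ, ¬ ((6 * σ + 1)/4 ≤ Y ω) := by
    rw [ae_iff]
    have he : {a | ¬¬((6 * σ + 1)/4 ≤ Y a)} = {ω | (6 * σ + 1)/4 ≤ Y ω} := by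
      ext a
      rw [Set.mem_setOf_eq, Set.mem_setOf_eq, not_not]
    rw [he]
    exact h20
  by_cases hθhalf : (6 * σ + 1)/4 < 1/2
  · obtain ⟨ω, hω1, hω2⟩ := (hae1.and hae2).exists
    push_neg at hω1 hω2
    linarith
  · push_neg at hθhalf
    have hmem : ∀ᵐ ω ∂μ, Y ω ∈ Set.Icc (1 - (6 * σ + 1)/4) ((6 * σ + 1)/4) := by
      filter_upwards [hae1, hae2] with ω hω1 hω2
      push_neg at hω1 hω2
      exact ⟨hω1, hω2.le⟩
    have hpop := variance_le_sq_of_bounded (μ := μ) hmem hm.aemeasurable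
    have hσ16 : 1/6 ≤ σ := by linarith
    nlinarith [mul_pos (show (0:ℝ) < σ - 1/10 by linarith) (show (0:ℝ) < 1/2 - σ by linarith)]

/-- final log algebra. -/
lemma final_logs {γ ε m Jlo Jup : ℝ} (hγ : 0 < γ) (hm0 : 0 < m)
    (hlo : m ≤ Jlo) (hup : Jup ≤ m) (hupp : 0 < Jup)
    (hw : Jlo ≤ Real.exp (γ * ε) * Jup) :
    -(1/γ) * Real.log Jlo ≤ -(1/γ) * Real.log m ∧
    -(1/γ) * Real.log m ≤ -(1/γ) * Real.log Jup ∧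
    -(1/γ) * Real.log Jup - -(1/γ) * Real.log Jlo ≤ ε := by
  have hJlo : 0 < Jlo := lt_of_lt_of_le hm0 hlo
  have hγ' : 0 < 1/γ := by positivity
  have hl1 : Real.log m ≤ Real.log Jlo := Real.log_le_log hm0 hlo
  have hl2 : Real.log Jup ≤ Real.log m := Real.log_le_log hupp hup
  have hl3 : Real.log Jlo ≤ γ * ε + Real.log Jup := by
    have := Real.log_le_log hJlo hw
    rwa [Real.log_mul (Real.exp_pos _).ne' hupp.ne', Real.log_exp] at this
  refine ⟨?_, ?_, ?_⟩
  · nlinarith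
  · nlinarith
  · have h4 : (1/γ) * (Real.log Jlo - Real.log Jup) ≤ (1/γ) * (γ * ε) :=
      mul_le_mul_of_nonneg_left (by linarith) hγ'.le
    have h5 : (1/γ) * (γ * ε) = ε := by field_simp
    nlinarith


/-- nonnegative `c` with `e^{-γc} = θ`. -/
lemma c_of_theta {γ θ : ℝ} (hγ : 0 < γ) (hθ0 : 0 < θ) (hθ1 : θ ≤ 1) :
    0 ≤ -Real.log θ / γ ∧ Real.exp (-γ * (-Real.log θ / γ)) = θ := by
  constructor
  · apply div_nonneg _ hγ.le
    exact neg_nonneg.mpr (Real.log_nonpos hθ0.le hθ1)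
  · rw [show -γ * (-Real.log θ / γ) = Real.log θ from by field_simp, Real.exp_log hθ0]

lemma set_eq_a {Ω : Type*} {X : Ω → ℝ} {γ θ ca : ℝ} (hγ : 0 < γ) (hca : 0 ≤ ca)
    (hexpa : Real.exp (-γ * ca) = 1 - θ) :
    {ω | Real.exp (-γ * max (X ω) 0) < 1 - θ} = {ω | ca < X ω} := by
  ext ω
  simp only [Set.mem_setOf_eq]
  rw [← hexpa, Real.exp_lt_exp]
  constructor
  · intro h
    have h2 : ca < max (X ω) 0 := by nlinarith
    rcases lt_max_iff.mp h2 with h3 | h3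
    · exact h3
    · linarith
  · intro h
    have h2 : ca < max (X ω) 0 := lt_max_iff.mpr (Or.inl h)
    nlinarith

lemma set_sub_b {Ω : Type*} {X : Ω → ℝ} {γ θ cb : ℝ} (hγ : 0 < γ) (hcb : 0 ≤ cb)
    (hexpb : Real.exp (-γ * cb) = θ) :
    {ω | θ ≤ Real.exp (-γ * max (X ω) 0)} ⊆ {ω | X ω ≤ cb} := by
  intro ω h
  simp only [Set.mem_setOf_eq] at h ⊢
  rw [← hexpb, Real.exp_le_exp] at h
  have h2 : max (X ω) 0 ≤ cb := by nlinarith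
  exact le_trans (le_max_left _ _) h2

/-- numeric parameter selection. -/
lemma pick_params {v θs δ : ℝ} (hv : 0 < v) (hv4 : v < 1/4) (hδ0 : 0 < δ) (hδ1 : δ < 1)
    (hθs : 2 * Real.sqrt v < θs) (hθs1 : θs < 1) :
    ∃ β1 β2 θ2 : ℝ, 0 < β1 ∧ 0 < β2 ∧ 4 * v * β1 < θs ^ 2 ∧ 4 * v * β2 < θ2 ^ 2 ∧
      0 < θ2 ∧ θ2 ^ 2 < 4 * v ∧ θ2 < 1 ∧
      Real.exp (-β1 * Real.log (2/δ)) + Real.exp (-β2 * Real.log (2/δ)) < δ := by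
  have hσ0 : 0 < Real.sqrt v := Real.sqrt_pos.mpr hv
  have hσ2 : Real.sqrt v ^ 2 = v := Real.sq_sqrt hv.le
  set σ := Real.sqrt v with hσdef
  set L := Real.log (2/δ) with hLdef
  have hL : 0 < L := Real.log_pos (by rw [lt_div_iff₀ hδ0]; linarith)
  have hlog2L : Real.log 2 < L := by
    rw [hLdef]
    apply Real.log_lt_log (by norm_num)
    rw [lt_div_iff₀ hδ0]
    nlinarith
  have heL : Real.exp (-L) = δ/2 := by
    rw [hLdef, Real.exp_neg, Real.exp_log (by positivity)]
    rw [inv_div]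
  set βa0 := θs^2/(4*v) with hβa0def
  have hβa0 : 1 < βa0 := by
    rw [hβa0def, lt_div_iff₀ (by positivity)]
    nlinarith
  have h4vβa0 : 4*v*βa0 = θs^2 := by
    rw [hβa0def]
    field_simp
  set A := Real.exp (-((βa0 - 1)/2) * L) with hAdef
  have hA0 : 0 < A := Real.exp_pos _
  have hA1 : A < 1 := by
    have h := Real.exp_lt_exp.mpr (show -((βa0 - 1)/2) * L < 0 by nlinarith)
    rwa [Real.exp_zero] at h
  set η := Real.log (1 + (1 - A)/2) / L with hηdef
  have hη0 : 0 < η := div_pos (Real.log_pos (by linarith)) hL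
  have hη1 : η < 1 := by
    rw [hηdef, div_lt_one hL]
    calc Real.log (1 + (1 - A)/2) < Real.log 2 :=
          Real.log_lt_log (by linarith) (by linarith)
      _ < L := hlog2L
  have hu0 : (0:ℝ) < 1 - η/2 := by linarith
  have hu1 : 1 - η/2 ≤ 1 := by linarith
  refine ⟨(βa0 + 1)/2, 1 - η, 2 * σ * Real.sqrt (1 - η/2), by linarith, by linarith, ?_, ?_, ?_, ?_, ?_, ?_⟩
  · -- 4v(βa0+1)/2 < θs²
    have : 4*v*((βa0+1)/2) < 4*v*βa0 := by
      apply mul_lt_mul_of_pos_left _ (by positivity)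
      linarith
    linarith [h4vβa0]
  · -- 4v(1−η) < θ2²
    have hsq : (2 * σ * Real.sqrt (1 - η/2))^2 = 4*v*(1 - η/2) := by
      rw [mul_pow, mul_pow, Real.sq_sqrt hu0.le, hσ2]
      ring
    rw [hsq]
    have : 4*v*(1-η) < 4*v*(1-η/2) := by
      apply mul_lt_mul_of_pos_left _ (by positivity)
      linarith
    linarith
  · positivity
  · have hsq : (2 * σ * Real.sqrt (1 - η/2))^2 = 4*v*(1 - η/2) := by
      rw [mul_pow, mul_pow, Real.sq_sqrt hu0.le, hσ2]
      ring
    rw [hsq]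
    have : 4*v*(1-η/2) < 4*v*1 := by
      apply mul_lt_mul_of_pos_left _ (by positivity)
      linarith
    linarith
  · -- θ2 < 1
    have hσhalf : σ < 1/2 := by nlinarith [hσ2, hσ0]
    have h1 : Real.sqrt (1 - η/2) ≤ 1 :=
      Real.sqrt_le_one.mpr (by linarith)
    calc 2 * σ * Real.sqrt (1 - η/2) ≤ 2 * σ * 1 :=
          mul_le_mul_of_nonneg_left h1 (by positivity)
      _ = 2 * σ := by ring
      _ < 1 := by linarith
  · -- the sum bound
    have e1 : Real.exp (-((βa0 + 1)/2) * L) = (δ/2) * A := by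
      rw [show -((βa0 + 1)/2) * L = -L + -((βa0 - 1)/2) * L from by ring, Real.exp_add, heL,
        hAdef]
    have e2 : Real.exp (-(1 - η) * L) = (δ/2) * (1 + (1 - A)/2) := by
      rw [show -(1 - η) * L = -L + η * L from by ring, Real.exp_add, heL, hηdef,
        div_mul_cancel₀ _ hL.ne', Real.exp_log (by linarith)]
    rw [e1, e2]
    have hda : 0 < δ * (1 - A) := mul_pos hδ0 (by linarith)
    nlinarith


lemma card_filter_cast (p : ℕ → Prop) [DecidablePred p] (k : ℕ) :
    (((Finset.range k).filter p).card : ℝ)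
      = ∑ i ∈ Finset.range k, if p i then (1:ℝ) else 0 := by
  rw [Finset.card_filter]
  push_cast
  rfl

lemma dkwDelta_sq {δ : ℝ} (hδ0 : 0 < δ) (hδ1 : δ < 1) {k : ℕ} (hk : 0 < k) :
    (k:ℝ) * dkwDelta δ k ^ 2 = Real.log (2/δ) / 2 := by
  have hL : 0 ≤ Real.log (2/δ) :=
    Real.log_nonneg (by rw [le_div_iff₀ hδ0]; linarith)
  have hkR : (0:ℝ) < k := by exact_mod_cast hk
  rw [dkwDelta, Real.sq_sqrt (by positivity)]
  field_simp

lemma dkwDelta_tendsto (δ : ℝ) : Tendsto (fun k : ℕ => dkwDelta δ k) atTop (nhds 0) := by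
  have h1 : Tendsto (fun k : ℕ => Real.log (2/δ) / (2 * k)) atTop (nhds 0) := by
    apply Tendsto.div_atTop tendsto_const_nhds
    exact Tendsto.const_mul_atTop two_pos tendsto_natCast_atTop_atTop
  have h2 := (Real.continuous_sqrt.tendsto 0).comp h1
  simp only [Real.sqrt_zero, Function.comp] at h2
  exact h2

lemma width_step {E m Δ : ℝ} (hE : 1 < E) (hm : 0 < m) (hΔ : 0 ≤ Δ)
    (h : Δ < (E - 1) * m / (2 * (1 + E))) : m + 2*Δ ≤ E * (m - 2*Δ) := by
  rw [lt_div_iff₀ (by linarith)] at h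
  nlinarith

lemma small_step1 {a b : ℝ} (h1 : a ≤ 1) (h2 : 0 ≤ b) : a * b ≤ b := by
  calc a * b ≤ 1 * b := mul_le_mul_of_nonneg_right h1 h2
    _ = b := one_mul b

set_option maxHeartbeats 1000000 in
/-- MASTER lemma: the positive-variance case. -/
lemma master {Ω : Type*} [MeasurableSpace Ω] (μ : Measure Ω) [IsProbabilityMeasure μ]
    (X : Ω → ℝ) (hX : Measurable X)
    (Xs : ℕ → Ω → ℝ) (hXs : ∀ i, Measurable (Xs i))
    (hindep : iIndepFun Xs μ)
    (hid : ∀ i, IdentDistrib (Xs i) X μ μ)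
    (γ δ ε : ℝ) (hγ : 0 < γ) (hδ0 : 0 < δ) (hδ1 : δ < 1) (hε : 0 < ε)
    (m v : ℝ) (hm : m = ∫ ω, Real.exp (-γ * max (X ω) 0) ∂μ) (hm0 : 0 < m) (hm1 : m ≤ 1)
    (hER : entropicRisk μ γ X = -(1/γ) * Real.log m)
    (hvdef : v = variance (fun ω => Real.exp (-γ * max (X ω) 0)) μ) (hv : 0 < v)
    (θa θb βa βb ca cb : ℝ)
    (hθa0 : 0 < θa) (hθa1 : θa < 1) (hθb0 : 0 < θb) (hθb1 : θb ≤ 1)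
    (hca : 0 ≤ ca) (hcb : 0 ≤ cb)
    (hexpa : Real.exp (-γ * ca) = 1 - θa) (hexpb : Real.exp (-γ * cb) = θb)
    (hpa : 0 < (μ {ω | ca < X ω}).toReal) (hpb : 0 < (μ {ω | X ω ≤ cb}).toReal)
    (hβa : 0 < βa) (hβb : 0 < βb)
    (hka : 4 * v * βa < θa ^ 2) (hkb : 4 * v * βb < θb ^ 2)
    (hsum : Real.exp (-βa * Real.log (2/δ)) + Real.exp (-βb * Real.log (2/δ)) < δ) :
    ∃ k₀ : ℕ, ∀ k ≥ k₀,
      ENNReal.ofReal (1 - δ) ≤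
        μ {ω | entropicRiskOfCdf γ (fun x => min (empiricalCdf Xs k ω x + dkwDelta δ k) 1)
                 ≤ entropicRisk μ γ X
             ∧ entropicRisk μ γ X
                 ≤ entropicRiskOfCdf γ (fun x => max (empiricalCdf Xs k ω x - dkwDelta δ k) 0)
             ∧ entropicRiskOfCdf γ (fun x => max (empiricalCdf Xs k ω x - dkwDelta δ k) 0)
                 - entropicRiskOfCdf γ (fun x => min (empiricalCdf Xs k ω x + dkwDelta δ k) 1)
                 ≤ ε} := by
  set L := Real.log (2/δ) with hLdef
  have hL : 0 < L := Real.log_pos (by rw [lt_div_iff₀ hδ0]; linarith)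
  have hexpmeas : Measurable (fun x : ℝ => Real.exp (-γ * max x 0)) :=
    Real.measurable_exp.comp ((measurable_id.max measurable_const).const_mul (-γ))
  have hY01 : ∀ x : ℝ, Real.exp (-γ * max x 0) ∈ Set.Ioc (0:ℝ) 1 := by
    intro x
    constructor
    · exact Real.exp_pos _
    · rw [show (1:ℝ) = Real.exp 0 from (Real.exp_zero).symm]
      apply Real.exp_le_exp.mpr
      have h1 : 0 ≤ max x 0 := le_max_right _ _
      nlinarith
  have hYimeas : ∀ i, Measurable (fun ω => Real.exp (-γ * max (Xs i ω) 0)) :=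
    fun i => hexpmeas.comp (hXs i)
  have hident : ∀ i, IdentDistrib (fun ω => Real.exp (-γ * max (Xs i ω) 0))
      (fun ω => Real.exp (-γ * max (X ω) 0)) μ μ :=
    fun i => (hid i).comp hexpmeas
  have hmeanYi : ∀ i, ∫ ω, Real.exp (-γ * max (Xs i ω) 0) ∂μ = m := fun i => by
    rw [hm]
    exact (hident i).integral_eq
  have hYiint : ∀ i, Integrable (fun ω => Real.exp (-γ * max (Xs i ω) 0)) μ := fun i =>
    integrable_of_bounded (hYimeas i) (C := 1)
      (fun ω => abs_le.mpr ⟨by linarith [(hY01 (Xs i ω)).1], (hY01 (Xs i ω)).2⟩)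
  -- the centered variables
  set ξ : ℕ → Ω → ℝ := fun i ω => Real.exp (-γ * max (Xs i ω) 0) - m with hξdef
  have hξmeas : ∀ i, Measurable (ξ i) := fun i => (hYimeas i).sub_const m
  have hξindep : iIndepFun ξ μ := by
    have h := hindep.comp (fun _ => fun x : ℝ => Real.exp (-γ * max x 0) - m)
      (fun _ => hexpmeas.sub_const m)
    exact h
  have hξbd : ∀ i ω, |ξ i ω| ≤ 1 := by
    intro i ω
    have h1 := (hY01 (Xs i ω)).1
    have h2 := (hY01 (Xs i ω)).2
    simp only [hξdef]
    rw [abs_le]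
    constructor <;> [linarith; linarith]
  have hξmean : ∀ i, ∫ ω, ξ i ω ∂μ = 0 := by
    intro i
    simp only [hξdef]
    rw [integral_sub (hYiint i) (integrable_const m), hmeanYi i, integral_const]
    simp
  have hmemY : MemLp (fun ω => Real.exp (-γ * max (X ω) 0)) 2 μ :=
    memLp_of_bounded (ae_of_all _ fun ω => ⟨(hY01 (X ω)).1.le, (hY01 (X ω)).2⟩)
      (hexpmeas.comp hX).aestronglyMeasurable 2
  have hvar_int : ∫ ω, (Real.exp (-γ * max (X ω) 0) - m) ^ 2 ∂μ = v := by
    rw [hvdef, variance_eq_integral hmemY.aemeasurable, ← hm]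
  have hξvar : ∀ i, ∫ ω, (ξ i ω) ^ 2 ∂μ ≤ v := by
    intro i
    have h2 : IdentDistrib (fun ω => (ξ i ω) ^ 2)
        (fun ω => (Real.exp (-γ * max (X ω) 0) - m) ^ 2) μ μ :=
      (hid i).comp ((hexpmeas.sub_const m).pow_const 2)
    rw [h2.integral_eq, hvar_int]
  -- the count variables
  set pa := (μ {ω | ca < X ω}).toReal with hpadef
  set pb := (μ {ω | X ω ≤ cb}).toReal with hpbdef
  set Za : ℕ → Ω → ℝ := fun i ω => if ca < Xs i ω then 1 else 0 with hZadef
  set Zb : ℕ → Ω → ℝ := fun i ω => if Xs i ω ≤ cb then 1 else 0 with hZbdef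
  have hZameas : ∀ i, Measurable (Za i) := fun i =>
    Measurable.ite (measurableSet_lt measurable_const (hXs i)) measurable_const measurable_const
  have hZbmeas : ∀ i, Measurable (Zb i) := fun i =>
    Measurable.ite (measurableSet_le (hXs i) measurable_const) measurable_const measurable_const
  have hZabd : ∀ i ω, Za i ω ∈ Set.Icc (0:ℝ) 1 := by
    intro i ω
    simp only [hZadef]
    by_cases h : ca < Xs i ω <;> simp [h]
  have hZbbd : ∀ i ω, Zb i ω ∈ Set.Icc (0:ℝ) 1 := by
    intro i ω
    simp only [hZbdef]
    by_cases h : Xs i ω ≤ cb <;> simp [h]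
  have hZamean : ∀ i, ∫ ω, Za i ω ∂μ = pa := by
    intro i
    have h1 : Za i = Set.indicator (Xs i ⁻¹' Set.Ioi ca) (fun _ => (1:ℝ)) := by
      ext ω
      by_cases h : ca < Xs i ω <;>
        simp [hZadef, Set.indicator_apply, Set.mem_preimage, Set.mem_Ioi, h]
    rw [h1, integral_indicator_const (1:ℝ) ((hXs i) measurableSet_Ioi),
      measureReal_def, (hid i).measure_mem_eq measurableSet_Ioi]
    have h2 : X ⁻¹' Set.Ioi ca = {ω | ca < X ω} := rfl
    rw [h2, hpadef]
    simp
  have hZbmean : ∀ i, ∫ ω, Zb i ω ∂μ = pb := by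
    intro i
    have h1 : Zb i = Set.indicator (Xs i ⁻¹' Set.Iic cb) (fun _ => (1:ℝ)) := by
      ext ω
      by_cases h : Xs i ω ≤ cb <;>
        simp [hZbdef, Set.indicator_apply, Set.mem_preimage, Set.mem_Iic, h]
    rw [h1, integral_indicator_const (1:ℝ) ((hXs i) measurableSet_Iic),
      measureReal_def, (hid i).measure_mem_eq measurableSet_Iic]
    have h2 : X ⁻¹' Set.Iic cb = {ω | X ω ≤ cb} := rfl
    rw [h2, hpbdef]
    simp
  have hZaind : ∀ i j : ℕ, i ≠ j → IndepFun (Za i) (Za j) μ := by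
    intro i j hij
    have h := (hindep.comp (fun _ => fun x : ℝ => if ca < x then (1:ℝ) else 0)
      (fun _ => Measurable.ite measurableSet_Ioi measurable_const measurable_const)).indepFun hij
    exact h
  have hZbind : ∀ i j : ℕ, i ≠ j → IndepFun (Zb i) (Zb j) μ := by
    intro i j hij
    have h := (hindep.comp (fun _ => fun x : ℝ => if x ≤ cb then (1:ℝ) else 0)
      (fun _ => Measurable.ite measurableSet_Iic measurable_const measurable_const)).indepFun hij
    exact h
  -- abbreviations for the chernoff targets
  set ea := Real.exp (-βa * L) with headef
  set eb := Real.exp (-βb * L) with hebdef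
  set g := δ - ea - eb with hgdef
  have hgpos : 0 < g := by
    rw [hgdef]
    linarith [hsum]
  have hea0 : 0 < ea := Real.exp_pos _
  have heb0 : 0 < eb := Real.exp_pos _
  have hra : 4 * v * βa / θa ^ 2 < 1 := by
    rw [div_lt_one (by positivity)]
    exact hka
  have hrb : 4 * v * βb / θb ^ 2 < 1 := by
    rw [div_lt_one (by positivity)]
    exact hkb
  have hra0 : 0 < 4 * v * βa / θa ^ 2 := by positivity
  have hrb0 : 0 < 4 * v * βb / θb ^ 2 := by positivity
  have hlog2a : 0 < Real.log (2 - 4 * v * βa / θa ^ 2) := Real.log_pos (by linarith)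
  have hlog2b : 0 < Real.log (2 - 4 * v * βb / θb ^ 2) := Real.log_pos (by linarith)
  have hexpγε : 1 < Real.exp (γ * ε) := by
    rw [← Real.exp_zero]
    exact Real.exp_lt_exp.mpr (by positivity)
  -- eventual conditions
  have hto := dkwDelta_tendsto δ
  have hc1 : ∀ᶠ k : ℕ in atTop, 1 ≤ k := eventually_ge_atTop 1
  have hc2 : ∀ᶠ k : ℕ in atTop, dkwDelta δ k < m/4 :=
    hto.eventually_lt_const (by positivity)
  have hc3 : ∀ᶠ k : ℕ in atTop,
      dkwDelta δ k < (Real.exp (γ*ε) - 1) * m / (2 * (1 + Real.exp (γ*ε))) :=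
    hto.eventually_lt_const (by
      apply div_pos (mul_pos (by linarith) hm0)
      positivity)
  have hc4 : ∀ᶠ k : ℕ in atTop, dkwDelta δ k < pa/2 :=
    hto.eventually_lt_const (by positivity)
  have hc5 : ∀ᶠ k : ℕ in atTop, dkwDelta δ k < pb/2 :=
    hto.eventually_lt_const (by positivity)
  have htop : Tendsto (fun k : ℕ => 1/((k:ℝ))) atTop (nhds 0) :=
    tendsto_one_div_atTop_nhds_zero_nat
  have hc6 : ∀ᶠ k : ℕ in atTop, 1/((k:ℝ) * pa^2) < g/4 := by
    have h1 : Tendsto (fun k : ℕ => (1/pa^2) * (1/(k:ℝ))) atTop (nhds 0) := by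
      have := htop.const_mul (1/pa^2)
      simpa using this
    have h2 : Tendsto (fun k : ℕ => 1/((k:ℝ) * pa^2)) atTop (nhds 0) := by
      refine h1.congr fun k => ?_
      field_simp
    exact h2.eventually_lt_const (by positivity)
  have hc7 : ∀ᶠ k : ℕ in atTop, 1/((k:ℝ) * pb^2) < g/4 := by
    have h1 : Tendsto (fun k : ℕ => (1/pb^2) * (1/(k:ℝ))) atTop (nhds 0) := by
      have := htop.const_mul (1/pb^2)
      simpa using this
    have h2 : Tendsto (fun k : ℕ => 1/((k:ℝ) * pb^2)) atTop (nhds 0) := by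
      refine h1.congr fun k => ?_
      field_simp
    exact h2.eventually_lt_const (by positivity)
  have hc8 : ∀ᶠ k : ℕ in atTop,
      θa * dkwDelta δ k / v < Real.log (2 - 4 * v * βa / θa ^ 2) := by
    have h1 : Tendsto (fun k : ℕ => θa * dkwDelta δ k / v) atTop (nhds 0) := by
      have := (hto.const_mul θa).div_const v
      simpa using this
    exact h1.eventually_lt_const hlog2a
  have hc9 : ∀ᶠ k : ℕ in atTop,
      θb * dkwDelta δ k / v < Real.log (2 - 4 * v * βb / θb ^ 2) := by
    have h1 : Tendsto (fun k : ℕ => θb * dkwDelta δ k / v) atTop (nhds 0) := by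
      have := (hto.const_mul θb).div_const v
      simpa using this
    exact h1.eventually_lt_const hlog2b
  obtain ⟨k₀, hk₀⟩ := eventually_atTop.mp
    ((((((((hc1.and hc2).and hc3).and hc4).and hc5).and hc6).and hc7).and hc8).and hc9)
  refine ⟨k₀, fun k hk => ?_⟩
  obtain ⟨⟨⟨⟨⟨⟨⟨⟨hk1, hk2⟩, hk3⟩, hk4⟩, hk5⟩, hk6⟩, hk7⟩, hk8⟩, hk9⟩ := hk₀ k hk
  have hkpos : 0 < k := hk1
  have hkR : (0:ℝ) < k := by exact_mod_cast hkpos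
  have hΔ0 : (0:ℝ) ≤ dkwDelta δ k := Real.sqrt_nonneg _
  have hΔsq : (k:ℝ) * dkwDelta δ k ^ 2 = L/2 := dkwDelta_sq hδ0 hδ1 hkpos
  -- measure bounds for the four bad events
  have hEa_bound : μ {ω | ∑ i ∈ Finset.range k, ξ i ω
      ≤ -(θa * ((k:ℝ) * dkwDelta δ k))} ≤ ENNReal.ofReal ea := by
    have hcc := chernoff_aux ξ hξmeas hξindep hξbd hξmean hv.le hξvar k
      (θa * ((k:ℝ) * dkwDelta δ k)) (θa * dkwDelta δ k / v) (by positivity)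
    have hexpt : Real.exp (θa * dkwDelta δ k / v) ≤ 2 - 4 * v * βa / θa ^ 2 := by
      have h := Real.exp_le_exp.mpr hk8.le
      rwa [Real.exp_log (by linarith)] at h
    have hcalc : -(θa * dkwDelta δ k / v * (θa * ((k:ℝ) * dkwDelta δ k)))
        + k * ((θa * dkwDelta δ k / v) ^ 2 / 2 * Real.exp (θa * dkwDelta δ k / v) * v)
        ≤ -βa * L := by
      have he1 : -(θa * dkwDelta δ k / v * (θa * ((k:ℝ) * dkwDelta δ k)))
          + k * ((θa * dkwDelta δ k / v) ^ 2 / 2 * Real.exp (θa * dkwDelta δ k / v) * v)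
          = (θa^2 / v) * ((k:ℝ) * dkwDelta δ k ^ 2)
            * (Real.exp (θa * dkwDelta δ k / v) / 2 - 1) := by
        field_simp
        ring
      rw [he1, hΔsq]
      have hE2 : Real.exp (θa * dkwDelta δ k / v) / 2 - 1 ≤ -(2 * v * βa / θa ^ 2) := by
        have heq : 4 * v * βa / θa ^ 2 = 2 * (2 * v * βa / θa ^ 2) := by ring
        rw [heq] at hexpt
        linarith [hexpt]
      have hposf : (0:ℝ) ≤ (θa^2 / v) * (L/2) := by positivity
      calc (θa^2 / v) * (L/2) * (Real.exp (θa * dkwDelta δ k / v) / 2 - 1)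
          = (θa^2 / v) * ((L/2) * (Real.exp (θa * dkwDelta δ k / v) / 2 - 1)) := by ring
        _ ≤ (θa^2 / v) * ((L/2) * (-(2 * v * βa / θa ^ 2))) := by
            apply mul_le_mul_of_nonneg_left _ (by positivity)
            apply mul_le_mul_of_nonneg_left hE2 (by positivity)
        _ = -βa * L := by
            field_simp
    calc μ {ω | ∑ i ∈ Finset.range k, ξ i ω ≤ -(θa * ((k:ℝ) * dkwDelta δ k))}
        = ENNReal.ofReal ((μ {ω | ∑ i ∈ Finset.range k, ξ i ω
            ≤ -(θa * ((k:ℝ) * dkwDelta δ k))}).toReal) :=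
          (ENNReal.ofReal_toReal (measure_ne_top μ _)).symm
      _ ≤ ENNReal.ofReal ea := by
          apply ENNReal.ofReal_le_ofReal
          rw [headef]
          exact hcc.trans (Real.exp_le_exp.mpr hcalc)
  have hEb_bound : μ {ω | ∑ i ∈ Finset.range k, (-(ξ i ω))
      ≤ -(θb * ((k:ℝ) * dkwDelta δ k))} ≤ ENNReal.ofReal eb := by
    have hξ'meas : ∀ i, Measurable (fun ω => -(ξ i ω)) := fun i => (hξmeas i).neg
    have hξ'indep : iIndepFun (fun i ω => -(ξ i ω)) μ := by
      have h := hindep.comp (fun _ => fun x : ℝ => -(Real.exp (-γ * max x 0) - m))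
        (fun _ => (hexpmeas.sub_const m).neg)
      exact h
    have hξ'bd : ∀ i ω, |(-(ξ i ω))| ≤ 1 := fun i ω => by
      rw [abs_neg]
      exact hξbd i ω
    have hξ'mean : ∀ i, ∫ ω, -(ξ i ω) ∂μ = 0 := fun i => by
      rw [integral_neg, hξmean i, neg_zero]
    have hξ'var : ∀ i, ∫ ω, (-(ξ i ω)) ^ 2 ∂μ ≤ v := fun i => by
      simpa using hξvar i
    have hcc := chernoff_aux (fun i ω => -(ξ i ω)) hξ'meas hξ'indep hξ'bd hξ'mean hv.le hξ'var k
      (θb * ((k:ℝ) * dkwDelta δ k)) (θb * dkwDelta δ k / v) (by positivity)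
    have hexpt : Real.exp (θb * dkwDelta δ k / v) ≤ 2 - 4 * v * βb / θb ^ 2 := by
      have h := Real.exp_le_exp.mpr hk9.le
      rwa [Real.exp_log (by linarith)] at h
    have hcalc : -(θb * dkwDelta δ k / v * (θb * ((k:ℝ) * dkwDelta δ k)))
        + k * ((θb * dkwDelta δ k / v) ^ 2 / 2 * Real.exp (θb * dkwDelta δ k / v) * v)
        ≤ -βb * L := by
      have he1 : -(θb * dkwDelta δ k / v * (θb * ((k:ℝ) * dkwDelta δ k)))
          + k * ((θb * dkwDelta δ k / v) ^ 2 / 2 * Real.exp (θb * dkwDelta δ k / v) * v)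
          = (θb^2 / v) * ((k:ℝ) * dkwDelta δ k ^ 2)
            * (Real.exp (θb * dkwDelta δ k / v) / 2 - 1) := by
        field_simp
        ring
      rw [he1, hΔsq]
      have hE2 : Real.exp (θb * dkwDelta δ k / v) / 2 - 1 ≤ -(2 * v * βb / θb ^ 2) := by
        have heq : 4 * v * βb / θb ^ 2 = 2 * (2 * v * βb / θb ^ 2) := by ring
        rw [heq] at hexpt
        linarith [hexpt]
      calc (θb^2 / v) * (L/2) * (Real.exp (θb * dkwDelta δ k / v) / 2 - 1)
          = (θb^2 / v) * ((L/2) * (Real.exp (θb * dkwDelta δ k / v) / 2 - 1)) := by ring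
        _ ≤ (θb^2 / v) * ((L/2) * (-(2 * v * βb / θb ^ 2))) := by
            apply mul_le_mul_of_nonneg_left _ (by positivity)
            apply mul_le_mul_of_nonneg_left hE2 (by positivity)
        _ = -βb * L := by
            field_simp
    calc μ {ω | ∑ i ∈ Finset.range k, (-(ξ i ω)) ≤ -(θb * ((k:ℝ) * dkwDelta δ k))}
        = ENNReal.ofReal ((μ {ω | ∑ i ∈ Finset.range k, (-(ξ i ω))
            ≤ -(θb * ((k:ℝ) * dkwDelta δ k))}).toReal) :=
          (ENNReal.ofReal_toReal (measure_ne_top μ _)).symm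
      _ ≤ ENNReal.ofReal eb := by
          apply ENNReal.ofReal_le_ofReal
          rw [hebdef]
          exact hcc.trans (Real.exp_le_exp.mpr hcalc)
  have hpa0 : 0 < pa := hpa
  have hpb0 : 0 < pb := hpb
  have hCa_bound : μ {ω | ∑ i ∈ Finset.range k, Za i ω < (k:ℝ) * dkwDelta δ k}
      ≤ ENNReal.ofReal (g/4) := by
    have hr1 : (k:ℝ) * dkwDelta δ k ≤ (k:ℝ) * pa / 2 := by
      have := mul_le_mul_of_nonneg_left hk4.le hkR.le
      calc (k:ℝ) * dkwDelta δ k ≤ (k:ℝ) * (pa/2) := this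
        _ = (k:ℝ) * pa / 2 := by ring
    refine le_trans (count_chebyshev Za hZameas hZaind hZabd hZamean hpa0 hkpos
      (r := (k:ℝ) * dkwDelta δ k) hr1) ?_
    exact ENNReal.ofReal_le_ofReal hk6.le
  have hCb_bound : μ {ω | ∑ i ∈ Finset.range k, Zb i ω < (k:ℝ) * dkwDelta δ k}
      ≤ ENNReal.ofReal (g/4) := by
    have hr1 : (k:ℝ) * dkwDelta δ k ≤ (k:ℝ) * pb / 2 := by
      have := mul_le_mul_of_nonneg_left hk5.le hkR.le
      calc (k:ℝ) * dkwDelta δ k ≤ (k:ℝ) * (pb/2) := this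
        _ = (k:ℝ) * pb / 2 := by ring
    refine le_trans (count_chebyshev Zb hZbmeas hZbind hZbbd hZbmean hpb0 hkpos
      (r := (k:ℝ) * dkwDelta δ k) hr1) ?_
    exact ENNReal.ofReal_le_ofReal hk7.le
  -- measurability
  have hmEa : MeasurableSet {ω | ∑ i ∈ Finset.range k, ξ i ω
      ≤ -(θa * ((k:ℝ) * dkwDelta δ k))} :=
    measurableSet_le (Finset.measurable_sum _ (fun i _ => hξmeas i)) measurable_const
  have hmEb : MeasurableSet {ω | ∑ i ∈ Finset.range k, (-(ξ i ω))
      ≤ -(θb * ((k:ℝ) * dkwDelta δ k))} :=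
    measurableSet_le (Finset.measurable_sum _ (fun i _ => (hξmeas i).neg)) measurable_const
  have hmCa : MeasurableSet {ω | ∑ i ∈ Finset.range k, Za i ω < (k:ℝ) * dkwDelta δ k} :=
    measurableSet_lt (Finset.measurable_sum _ (fun i _ => hZameas i)) measurable_const
  have hmCb : MeasurableSet {ω | ∑ i ∈ Finset.range k, Zb i ω < (k:ℝ) * dkwDelta δ k} :=
    measurableSet_lt (Finset.measurable_sum _ (fun i _ => hZbmeas i)) measurable_const
  set BadSet := {ω | ∑ i ∈ Finset.range k, ξ i ω ≤ -(θa * ((k:ℝ) * dkwDelta δ k))}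
      ∪ {ω | ∑ i ∈ Finset.range k, (-(ξ i ω)) ≤ -(θb * ((k:ℝ) * dkwDelta δ k))}
      ∪ {ω | ∑ i ∈ Finset.range k, Za i ω < (k:ℝ) * dkwDelta δ k}
      ∪ {ω | ∑ i ∈ Finset.range k, Zb i ω < (k:ℝ) * dkwDelta δ k} with hBadSet
  have hmBad : MeasurableSet BadSet := ((hmEa.union hmEb).union hmCa).union hmCb
  have hBad_bound : μ BadSet ≤ ENNReal.ofReal δ := by
    calc μ BadSet ≤ μ ({ω | ∑ i ∈ Finset.range k, ξ i ω ≤ -(θa * ((k:ℝ) * dkwDelta δ k))}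
          ∪ {ω | ∑ i ∈ Finset.range k, (-(ξ i ω)) ≤ -(θb * ((k:ℝ) * dkwDelta δ k))}
          ∪ {ω | ∑ i ∈ Finset.range k, Za i ω < (k:ℝ) * dkwDelta δ k})
          + μ {ω | ∑ i ∈ Finset.range k, Zb i ω < (k:ℝ) * dkwDelta δ k} := by
          rw [hBadSet]
          exact measure_union_le _ _
      _ ≤ (μ ({ω | ∑ i ∈ Finset.range k, ξ i ω ≤ -(θa * ((k:ℝ) * dkwDelta δ k))}
          ∪ {ω | ∑ i ∈ Finset.range k, (-(ξ i ω)) ≤ -(θb * ((k:ℝ) * dkwDelta δ k))})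
          + μ {ω | ∑ i ∈ Finset.range k, Za i ω < (k:ℝ) * dkwDelta δ k})
          + μ {ω | ∑ i ∈ Finset.range k, Zb i ω < (k:ℝ) * dkwDelta δ k} := by
          gcongr
          exact measure_union_le _ _
      _ ≤ ((μ {ω | ∑ i ∈ Finset.range k, ξ i ω ≤ -(θa * ((k:ℝ) * dkwDelta δ k))}
          + μ {ω | ∑ i ∈ Finset.range k, (-(ξ i ω)) ≤ -(θb * ((k:ℝ) * dkwDelta δ k))})
          + μ {ω | ∑ i ∈ Finset.range k, Za i ω < (k:ℝ) * dkwDelta δ k})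
          + μ {ω | ∑ i ∈ Finset.range k, Zb i ω < (k:ℝ) * dkwDelta δ k} := by
          gcongr
          exact measure_union_le _ _
      _ ≤ ((ENNReal.ofReal ea + ENNReal.ofReal eb) + ENNReal.ofReal (g/4))
          + ENNReal.ofReal (g/4) := by
          gcongr
      _ = ENNReal.ofReal (ea + eb + g/4 + g/4) := by
          rw [← ENNReal.ofReal_add hea0.le heb0.le,
            ← ENNReal.ofReal_add (by positivity) (by positivity : (0:ℝ) ≤ g/4),
            ← ENNReal.ofReal_add (by positivity) (by positivity : (0:ℝ) ≤ g/4)]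
      _ ≤ ENNReal.ofReal δ := by
          apply ENNReal.ofReal_le_ofReal
          rw [hgdef]
          linarith
  have hcompl : ENNReal.ofReal (1-δ) ≤ μ BadSetᶜ := by
    rw [measure_compl hmBad (measure_ne_top μ _), measure_univ]
    calc ENNReal.ofReal (1-δ) = 1 - ENNReal.ofReal δ := by
          rw [ENNReal.ofReal_sub _ hδ0.le, ENNReal.ofReal_one]
      _ ≤ 1 - μ BadSet := tsub_le_tsub_left hBad_bound 1
  refine le_trans hcompl (measure_mono ?_)
  -- the deterministic inclusion
  intro ω hω
  rw [hBadSet] at hω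
  simp only [Set.mem_compl_iff, Set.mem_union, not_or, Set.mem_setOf_eq, not_le, not_lt] at hω
  obtain ⟨⟨⟨hnEa, hnEb⟩, hnCa⟩, hnCb⟩ := hω
  -- scalar facts
  have hsum_eq : ∑ i ∈ Finset.range k, ξ i ω
      = (∑ i ∈ Finset.range k, Real.exp (-γ * max (Xs i ω) 0)) - k * m := by
    simp only [hξdef]
    rw [Finset.sum_sub_distrib, Finset.sum_const, Finset.card_range, nsmul_eq_mul]
  have hSa : (m - θa * dkwDelta δ k) * k
      < ∑ i ∈ Finset.range k, Real.exp (-γ * max (Xs i ω) 0) := by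
    rw [hsum_eq] at hnEa
    have hbr : (m - θa * dkwDelta δ k) * k = k * m - θa * ((k:ℝ) * dkwDelta δ k) := by ring
    linarith [hnEa]
  have hSb : (∑ i ∈ Finset.range k, Real.exp (-γ * max (Xs i ω) 0))
      < (m + θb * dkwDelta δ k) * k := by
    rw [Finset.sum_neg_distrib, hsum_eq] at hnEb
    have hbr : (m + θb * dkwDelta δ k) * k = k * m + θb * ((k:ℝ) * dkwDelta δ k) := by ring
    linarith [hnEb]
  have hCntA : (k:ℝ) * dkwDelta δ k
      ≤ (((Finset.range k).filter fun i => ca < Xs i ω).card : ℝ) := by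
    rw [card_filter_cast]
    exact hnCa
  have hCntB : (k:ℝ) * dkwDelta δ k
      ≤ (((Finset.range k).filter fun i => Xs i ω ≤ cb).card : ℝ) := by
    rw [card_filter_cast]
    exact hnCb
  -- the empirical integral identity
  have hJF : γ * (∫ x in Set.Ioi (0:ℝ), Real.exp (-γ * x) * empiricalCdf Xs k ω x)
      = (∑ i ∈ Finset.range k, Real.exp (-γ * max (Xs i ω) 0)) / k := by
    rw [integral_exp_empiricalCdf Xs k ω hγ hkpos]
    field_simp
  have hJFlo : m - θa * dkwDelta δ k
      < γ * (∫ x in Set.Ioi (0:ℝ), Real.exp (-γ * x) * empiricalCdf Xs k ω x) := by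
    rw [hJF, lt_div_iff₀ hkR]
    exact hSa
  have hJFhi : γ * (∫ x in Set.Ioi (0:ℝ), Real.exp (-γ * x) * empiricalCdf Xs k ω x)
      < m + θb * dkwDelta δ k := by
    rw [hJF, div_lt_iff₀ hkR]
    exact hSb
  -- band bounds
  have hDlo := lowband_ge hγ hΔ0 hca hkpos hCntA
  have hDlo2 := lowband_le (Xs := Xs) (k := k) (ω := ω) hγ hΔ0
  have hDup := upband_le hγ hΔ0 hcb hkpos hCntB
  have hDup2 := upband_ge (Xs := Xs) (k := k) (ω := ω) hγ hΔ0
  rw [hexpa] at hDlo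
  rw [hexpb] at hDup
  have hlo : m ≤ γ * ∫ x in Set.Ioi (0:ℝ), Real.exp (-γ * x)
      * min (empiricalCdf Xs k ω x + dkwDelta δ k) 1 := by
    have h := mul_le_mul_of_nonneg_left hDlo hγ.le
    rw [mul_add] at h
    have h2 : γ * (dkwDelta δ k * (1 - (1 - θa)) / γ) = dkwDelta δ k * θa := by
      field_simp
      ring
    rw [h2] at h
    have hcomm : dkwDelta δ k * θa = θa * dkwDelta δ k := mul_comm _ _
    linarith [hJFlo, h]
  have hup : γ * (∫ x in Set.Ioi (0:ℝ), Real.exp (-γ * x)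
      * max (empiricalCdf Xs k ω x - dkwDelta δ k) 0) ≤ m := by
    have h := mul_le_mul_of_nonneg_left hDup hγ.le
    rw [mul_sub] at h
    have h2 : γ * (dkwDelta δ k * θb / γ) = dkwDelta δ k * θb := by
      field_simp
    rw [h2] at h
    have hcomm : dkwDelta δ k * θb = θb * dkwDelta δ k := mul_comm _ _
    linarith [hJFhi, h]
  have hupp2 : m - 2 * dkwDelta δ k ≤ γ * (∫ x in Set.Ioi (0:ℝ), Real.exp (-γ * x)
      * max (empiricalCdf Xs k ω x - dkwDelta δ k) 0) := by
    have h := mul_le_mul_of_nonneg_left hDup2 hγ.le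
    rw [mul_sub] at h
    have h2 : γ * (dkwDelta δ k / γ) = dkwDelta δ k := by
      field_simp
    rw [h2] at h
    have hθaΔ : θa * dkwDelta δ k ≤ dkwDelta δ k := small_step1 hθa1.le hΔ0
    linarith [hJFlo, h]
  have hupp : 0 < γ * (∫ x in Set.Ioi (0:ℝ), Real.exp (-γ * x)
      * max (empiricalCdf Xs k ω x - dkwDelta δ k) 0) := by
    linarith [hupp2, hk2, hm0]
  have hwlo : γ * (∫ x in Set.Ioi (0:ℝ), Real.exp (-γ * x)
      * min (empiricalCdf Xs k ω x + dkwDelta δ k) 1) ≤ m + 2 * dkwDelta δ k := by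
    have h := mul_le_mul_of_nonneg_left hDlo2 hγ.le
    rw [mul_add] at h
    have h2 : γ * (dkwDelta δ k / γ) = dkwDelta δ k := by
      field_simp
    rw [h2] at h
    have hθbΔ : θb * dkwDelta δ k ≤ dkwDelta δ k :=
      small_step1 hθb1 hΔ0
    linarith [hJFhi, h]
  have hw : γ * (∫ x in Set.Ioi (0:ℝ), Real.exp (-γ * x)
      * min (empiricalCdf Xs k ω x + dkwDelta δ k) 1)
      ≤ Real.exp (γ * ε) * (γ * (∫ x in Set.Ioi (0:ℝ), Real.exp (-γ * x)
      * max (empiricalCdf Xs k ω x - dkwDelta δ k) 0)) := by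
    have h1 : m + 2 * dkwDelta δ k ≤ Real.exp (γ * ε) * (m - 2 * dkwDelta δ k) :=
      width_step hexpγε hm0 hΔ0 hk3
    have h2 : Real.exp (γ * ε) * (m - 2 * dkwDelta δ k)
        ≤ Real.exp (γ * ε) * (γ * (∫ x in Set.Ioi (0:ℝ), Real.exp (-γ * x)
          * max (empiricalCdf Xs k ω x - dkwDelta δ k) 0)) :=
      mul_le_mul_of_nonneg_left hupp2 (Real.exp_pos _).le
    linarith [hwlo]
  have hf := final_logs hγ hm0 hlo hup hupp hw
  rw [Set.mem_setOf_eq]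
  simp only [entropicRiskOfCdf]
  rw [hER]
  exact hf



end DKWAux

/-- The DKW method yields effective bounds on entropic risk: for a
nonnegative random variable `X`, `γ > 0`, `δ ∈ (0,1)`, `ε > 0` and i.i.d. copies `Xs` of
`X`, there is a `k₀` such that for all `k ≥ k₀`, with probability at least `1 - δ`,
`E_γ(F̲_k) ≤ ERisk_γ(X) ≤ E_γ(F̄_k)` and `E_γ(F̄_k) - E_γ(F̲_k) ≤ ε`, where
`F̲_k = min(F̂_k + Δ_k, 1)` and `F̄_k = max(F̂_k - Δ_k, 0)` are the DKW band functions. -/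
theorem dkw_effective_bounds_entropicRisk
    {Ω : Type*} [MeasurableSpace Ω] (μ : Measure Ω) [IsProbabilityMeasure μ]
    (X : Ω → ℝ) (hX : Measurable X) (hX0 : 0 ≤ᵐ[μ] X)
    (Xs : ℕ → Ω → ℝ) (hXs : ∀ i, Measurable (Xs i))
    (hindep : iIndepFun Xs μ)
    (hid : ∀ i, IdentDistrib (Xs i) X μ μ)
    (γ δ ε : ℝ) (hγ : 0 < γ) (hδ : δ ∈ Set.Ioo (0 : ℝ) 1) (hε : 0 < ε) :
    ∃ k₀ : ℕ, ∀ k ≥ k₀,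
      ENNReal.ofReal (1 - δ) ≤
        μ {ω | entropicRiskOfCdf γ (fun x => min (empiricalCdf Xs k ω x + dkwDelta δ k) 1)
                 ≤ entropicRisk μ γ X
             ∧ entropicRisk μ γ X
                 ≤ entropicRiskOfCdf γ (fun x => max (empiricalCdf Xs k ω x - dkwDelta δ k) 0)
             ∧ entropicRiskOfCdf γ (fun x => max (empiricalCdf Xs k ω x - dkwDelta δ k) 0)
                 - entropicRiskOfCdf γ (fun x => min (empiricalCdf Xs k ω x + dkwDelta δ k) 1)
                 ≤ ε} := by
  obtain ⟨hδ0, hδ1⟩ := hδ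
  have hexpmeas : Measurable (fun x : ℝ => Real.exp (-γ * max x 0)) :=
    Real.measurable_exp.comp ((measurable_id.max measurable_const).const_mul (-γ))
  have hY01 : ∀ x : ℝ, Real.exp (-γ * max x 0) ∈ Set.Ioc (0:ℝ) 1 := by
    intro x
    refine ⟨Real.exp_pos _, ?_⟩
    have h := Real.exp_le_exp.mpr (show -γ * max x 0 ≤ 0 by
      nlinarith [le_max_right x (0:ℝ)])
    rwa [Real.exp_zero] at h
  have hYmeas : Measurable (fun ω => Real.exp (-γ * max (X ω) 0)) := hexpmeas.comp hX
  have hYint : Integrable (fun ω => Real.exp (-γ * max (X ω) 0)) μ :=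
    DKWAux.integrable_of_bounded hYmeas (C := 1)
      (fun ω => abs_le.mpr ⟨by linarith [(hY01 (X ω)).1], (hY01 (X ω)).2⟩)
  set m := ∫ ω, Real.exp (-γ * max (X ω) 0) ∂μ with hmdef
  have hm0 : 0 < m := by
    rw [hmdef, integral_pos_iff_support_of_nonneg (fun ω => (hY01 (X ω)).1.le) hYint]
    have hsupp : (Function.support fun ω => Real.exp (-γ * max (X ω) 0)) = Set.univ := by
      ext ω
      simp [Function.mem_support, (Real.exp_pos (-γ * max (X ω) 0)).ne']
    rw [hsupp]
    simp
  have hm1 : m ≤ 1 := by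
    rw [hmdef]
    calc ∫ ω, Real.exp (-γ * max (X ω) 0) ∂μ ≤ ∫ _ω, (1:ℝ) ∂μ :=
          integral_mono hYint (integrable_const 1) (fun ω => (hY01 (X ω)).2)
      _ = 1 := by simp
  have hER : entropicRisk μ γ X = -(1/γ) * Real.log m := by
    rw [entropicRisk, hmdef]
    congr 2
    apply integral_congr_ae
    filter_upwards [hX0] with ω hω
    have hω' : (0:ℝ) ≤ X ω := hω
    rw [max_eq_left hω']
  set v := variance (fun ω => Real.exp (-γ * max (X ω) 0)) μ with hvdef
  have hvnn : 0 ≤ v := by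
    rw [hvdef]
    exact variance_nonneg _ μ
  have hexpγε : 1 < Real.exp (γ * ε) := by
    have h := Real.exp_lt_exp.mpr (show (0:ℝ) < γ * ε by positivity)
    rwa [Real.exp_zero] at h
  rcases hvnn.eq_or_lt with hveq | hv
  · -- degenerate branch : variance zero
    have hvar0 : variance (fun ω => Real.exp (-γ * max (X ω) 0)) μ = 0 := by
      rw [← hvdef]
      exact hveq.symm
    have hmem : MemLp (fun ω => Real.exp (-γ * max (X ω) 0)) 2 μ :=
      memLp_of_bounded (ae_of_all _ fun ω => ⟨(hY01 (X ω)).1.le, (hY01 (X ω)).2⟩)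
        hYmeas.aestronglyMeasurable 2
    have hev0 : evariance (fun ω => Real.exp (-γ * max (X ω) 0)) μ = 0 := by
      rw [← hmem.ofReal_variance_eq, hvar0, ENNReal.ofReal_zero]
    have hYae : ∀ᵐ ω ∂μ, Real.exp (-γ * max (X ω) 0) = m := by
      have h := (evariance_eq_zero_iff hYmeas.aemeasurable).mp hev0
      filter_upwards [h] with ω hω
      rw [hω]
    have hYiae : ∀ i : ℕ, ∀ᵐ ω ∂μ, Real.exp (-γ * max (Xs i ω) 0) = m := by
      intro i
      have hident : IdentDistrib (fun ω => Real.exp (-γ * max (Xs i ω) 0))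
          (fun ω => Real.exp (-γ * max (X ω) 0)) μ μ := (hid i).comp hexpmeas
      have h0 : μ ((fun ω => Real.exp (-γ * max (X ω) 0)) ⁻¹' {m}ᶜ) = 0 := by
        rw [ae_iff] at hYae
        have h2 : ((fun ω => Real.exp (-γ * max (X ω) 0)) ⁻¹' {m}ᶜ)
            = {ω | ¬ Real.exp (-γ * max (X ω) 0) = m} := by
          ext ω
          simp
        rw [h2]
        exact hYae
      have h1 := hident.measure_mem_eq (MeasurableSet.compl (measurableSet_singleton m))
      rw [ae_iff]
      have h2 : {ω | ¬ Real.exp (-γ * max (Xs i ω) 0) = m}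
          = (fun ω => Real.exp (-γ * max (Xs i ω) 0)) ⁻¹' {m}ᶜ := by
        ext ω
        simp
      rw [h2, h1]
      exact h0
    have hto := DKWAux.dkwDelta_tendsto δ
    have hc1 : ∀ᶠ k : ℕ in Filter.atTop, 1 ≤ k := Filter.eventually_ge_atTop 1
    have hc2 : ∀ᶠ k : ℕ in Filter.atTop, dkwDelta δ k < m/4 :=
      hto.eventually_lt_const (by positivity)
    have hc3 : ∀ᶠ k : ℕ in Filter.atTop,
        dkwDelta δ k < (Real.exp (γ*ε) - 1) * m / (2 * (1 + Real.exp (γ*ε))) :=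
      hto.eventually_lt_const (by
        apply div_pos (mul_pos (by linarith) hm0)
        positivity)
    obtain ⟨k₀, hk₀⟩ := Filter.eventually_atTop.mp ((hc1.and hc2).and hc3)
    refine ⟨k₀, fun k hk => ?_⟩
    obtain ⟨⟨hk1, hk2⟩, hk3⟩ := hk₀ k hk
    have hkR : (0:ℝ) < k := by exact_mod_cast hk1
    have hΔ0 : (0:ℝ) ≤ dkwDelta δ k := Real.sqrt_nonneg _
    have hGae : ∀ᵐ ω ∂μ, ∀ i ∈ Finset.range k, Real.exp (-γ * max (Xs i ω) 0) = m := by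
      rw [Filter.eventually_all_finset]
      exact fun i _ => hYiae i
    refine le_trans (ENNReal.ofReal_le_one.mpr (by linarith)) ?_
    rw [← measure_univ (μ := μ)]
    apply measure_mono_ae
    filter_upwards [hGae] with ω hω _
    have hsum_eq : ∑ i ∈ Finset.range k, Real.exp (-γ * max (Xs i ω) 0) = k * m := by
      rw [Finset.sum_congr rfl hω, Finset.sum_const, Finset.card_range, nsmul_eq_mul]
    have hJF : γ * (∫ x in Set.Ioi (0:ℝ), Real.exp (-γ * x) * empiricalCdf Xs k ω x)
        = m := by
      rw [DKWAux.integral_exp_empiricalCdf Xs k ω hγ hk1, hsum_eq]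
      field_simp
    have hDlo0 := DKWAux.lowband_ge0 (Xs := Xs) (k := k) (ω := ω) hγ hΔ0
    have hDlo2 := DKWAux.lowband_le (Xs := Xs) (k := k) (ω := ω) hγ hΔ0
    have hDup0 := DKWAux.upband_le0 (Xs := Xs) (k := k) (ω := ω) hγ hΔ0
    have hDup2 := DKWAux.upband_ge (Xs := Xs) (k := k) (ω := ω) hγ hΔ0
    have hlo : m ≤ γ * ∫ x in Set.Ioi (0:ℝ), Real.exp (-γ * x)
        * min (empiricalCdf Xs k ω x + dkwDelta δ k) 1 := by
      have h := mul_le_mul_of_nonneg_left hDlo0 hγ.le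
      linarith [hJF]
    have hup : γ * (∫ x in Set.Ioi (0:ℝ), Real.exp (-γ * x)
        * max (empiricalCdf Xs k ω x - dkwDelta δ k) 0) ≤ m := by
      have h := mul_le_mul_of_nonneg_left hDup0 hγ.le
      linarith [hJF]
    have hppre : m - dkwDelta δ k ≤ γ * (∫ x in Set.Ioi (0:ℝ), Real.exp (-γ * x)
        * max (empiricalCdf Xs k ω x - dkwDelta δ k) 0) := by
      have h := mul_le_mul_of_nonneg_left hDup2 hγ.le
      rw [mul_sub] at h
      have h2 : γ * (dkwDelta δ k / γ) = dkwDelta δ k := by field_simp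
      rw [h2] at h
      linarith [hJF]
    have hupp : 0 < γ * (∫ x in Set.Ioi (0:ℝ), Real.exp (-γ * x)
        * max (empiricalCdf Xs k ω x - dkwDelta δ k) 0) := by
      linarith [hppre, hk2]
    have hwpre : γ * (∫ x in Set.Ioi (0:ℝ), Real.exp (-γ * x)
        * min (empiricalCdf Xs k ω x + dkwDelta δ k) 1) ≤ m + dkwDelta δ k := by
      have h := mul_le_mul_of_nonneg_left hDlo2 hγ.le
      rw [mul_add] at h
      have h2 : γ * (dkwDelta δ k / γ) = dkwDelta δ k := by field_simp
      rw [h2] at h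
      linarith [hJF]
    have hw : γ * (∫ x in Set.Ioi (0:ℝ), Real.exp (-γ * x)
        * min (empiricalCdf Xs k ω x + dkwDelta δ k) 1)
        ≤ Real.exp (γ * ε) * (γ * (∫ x in Set.Ioi (0:ℝ), Real.exp (-γ * x)
        * max (empiricalCdf Xs k ω x - dkwDelta δ k) 0)) := by
      have h1 := DKWAux.width_step hexpγε hm0 hΔ0 hk3
      have h2 : Real.exp (γ*ε) * (m - 2 * dkwDelta δ k)
          ≤ Real.exp (γ*ε) * (γ * (∫ x in Set.Ioi (0:ℝ), Real.exp (-γ * x)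
            * max (empiricalCdf Xs k ω x - dkwDelta δ k) 0)) :=
        mul_le_mul_of_nonneg_left (by linarith [hppre]) (Real.exp_pos _).le
      linarith
    have hf := DKWAux.final_logs hγ hm0 hlo hup hupp hw
    show entropicRiskOfCdf γ (fun x => min (empiricalCdf Xs k ω x + dkwDelta δ k) 1)
          ≤ entropicRisk μ γ X
        ∧ entropicRisk μ γ X
          ≤ entropicRiskOfCdf γ (fun x => max (empiricalCdf Xs k ω x - dkwDelta δ k) 0)
        ∧ entropicRiskOfCdf γ (fun x => max (empiricalCdf Xs k ω x - dkwDelta δ k) 0)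
          - entropicRiskOfCdf γ (fun x => min (empiricalCdf Xs k ω x + dkwDelta δ k) 1) ≤ ε
    simp only [entropicRiskOfCdf]
    rw [hER]
    exact hf
  · -- positive-variance branch
    have hYb : ∀ ω, (fun ω => Real.exp (-γ * max (X ω) 0)) ω ∈ Set.Ioc (0:ℝ) 1 :=
      fun ω => hY01 (X ω)
    obtain ⟨θs, hθs2, hθs1, hcase⟩ := DKWAux.exists_theta hYmeas hYb hv
    have hv4 : v < 1/4 := DKWAux.var_lt_quarter hYmeas hYb hv
    obtain ⟨β1, β2, θ2, hβ1, hβ2, h4v1, h4v2, hθ20, hθ2sq, hθ21, hsum⟩ :=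
      DKWAux.pick_params hv hv4 hδ0 hδ1 hθs2 hθs1
    have hσ0 : 0 < Real.sqrt v := Real.sqrt_pos.mpr hv
    have hθs0 : 0 < θs := lt_trans (by positivity) hθs2
    rcases hcase with ha | hb
    · -- case A : θa := θs, θb := θ2
      have hθc := DKWAux.c_of_theta hγ (show (0:ℝ) < 1 - θs by linarith) (by linarith)
      have hθc2 := DKWAux.c_of_theta hγ hθ20 hθ21.le
      refine DKWAux.master μ X hX Xs hXs hindep hid γ δ ε hγ hδ0 hδ1 hε m v hmdef hm0 hm1
        hER hvdef hv θs θ2 β1 β2 (-Real.log (1 - θs) / γ) (-Real.log θ2 / γ)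
        hθs0 hθs1 hθ20 hθ21.le hθc.1 hθc2.1 hθc.2 hθc2.2 ?_ ?_ hβ1 hβ2 h4v1 h4v2 hsum
      · have hset := DKWAux.set_eq_a (X := X) hγ hθc.1 hθc.2
        have ha2 : 0 < μ {ω | -Real.log (1 - θs) / γ < X ω} := hset ▸ ha
        exact ENNReal.toReal_pos ha2.ne' (measure_ne_top μ _)
      · have hpos := DKWAux.meas_pos_upper (μ := μ) hYmeas hYb (θ := θ2) (by linarith)
        have hsub := DKWAux.set_sub_b (X := X) hγ hθc2.1 hθc2.2
        have h2 : 0 < μ {ω | X ω ≤ -Real.log θ2 / γ} :=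
          lt_of_lt_of_le hpos (measure_mono hsub)
        exact ENNReal.toReal_pos h2.ne' (measure_ne_top μ _)
    · -- case B : θa := θ2, θb := θs
      have hθc := DKWAux.c_of_theta hγ (show (0:ℝ) < 1 - θ2 by linarith) (by linarith)
      have hθc2 := DKWAux.c_of_theta hγ hθs0 hθs1.le
      refine DKWAux.master μ X hX Xs hXs hindep hid γ δ ε hγ hδ0 hδ1 hε m v hmdef hm0 hm1
        hER hvdef hv θ2 θs β2 β1 (-Real.log (1 - θ2) / γ) (-Real.log θs / γ)
        hθ20 hθ21 hθs0 hθs1.le hθc.1 hθc2.1 hθc.2 hθc2.2 ?_ ?_ hβ2 hβ1 h4v2 h4v1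
        (by linarith [hsum])
      · have hpos := DKWAux.meas_pos_lower (μ := μ) hYmeas hYb (θ := θ2) (by linarith)
        have hset := DKWAux.set_eq_a (X := X) hγ hθc.1 hθc.2
        have ha2 : 0 < μ {ω | -Real.log (1 - θ2) / γ < X ω} := hset ▸ hpos
        exact ENNReal.toReal_pos ha2.ne' (measure_ne_top μ _)
      · have hsub := DKWAux.set_sub_b (X := X) hγ hθc2.1 hθc2.2
        have h2 : 0 < μ {ω | X ω ≤ -Real.log θs / γ} :=
          lt_of_lt_of_le hb (measure_mono hsub)
        exact ENNReal.toReal_pos h2.ne' (measure_ne_top μ _)
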